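/- arXiv:math/0505262 — 5 statements merged into one kernel-verified Lean document; each statement's English description precedes it below -/
import Mathlib

section
/- The poset 𝔑 is Y-multiranked by the sorting map: if Q covers P in 𝔑, then the weight of Q equals the weight of P plus 1, and for every i ≥ 1 the i-th largest part of P (taken as 0 when i exceeds the width of P) is at most the i-th largest part of Q; that is, the decreasing rearrangement mw*(Q) covers mw*(P) in Young's lattice. Moreover, every covering pair λ ⋖ μ of partitions in Young's lattice is of the form mw*(P) ⋖ mw*(Q) for some covering pair Q ⋗ P in 𝔑, and mw* maps the set of compositions onto the set of all partitions. -/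
/-- A composition: a finite list of positive integers. -/
def IsComposition (P : List ℕ) : Prop := ∀ x ∈ P, 0 < x

/-- Covering relation of the poset 𝔑: prepend a part 1, append a part 1,
or increase one part by 1. -/
def coverN (P Q : List ℕ) : Prop :=
  Q = 1 :: P ∨ Q = P ++ [1] ∨ ∃ j, j < P.length ∧ Q = P.set j (P.getD j 0 + 1)

/-- `mwStar P` is the decreasing rearrangement of `P`. -/
def mwStar (P : List ℕ) : List ℕ := ((P : Multiset ℕ).sort (· ≤ ·)).reverse

/-- A partition: a weakly decreasing list of positive integers. -/
def IsPartition (l : List ℕ) : Prop := (∀ x ∈ l, 0 < x) ∧ l.Pairwise (· ≥ ·)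

/-- Covering in Young's lattice: the weight goes up by one and every part weakly increases
(parts beyond the width are taken to be `0`). -/
def YoungCover (lam mu : List ℕ) : Prop :=
  mu.sum = lam.sum + 1 ∧ ∀ i, lam.getD i 0 ≤ mu.getD i 0

lemma mwStar_perm (P : List ℕ) : (mwStar P).Perm P := by
  refine (List.reverse_perm _).trans ?_
  exact Multiset.coe_eq_coe.mp (Multiset.sort_eq _ _)

lemma mwStar_sorted (P : List ℕ) : (mwStar P).Pairwise (· ≥ ·) := by
  have := Multiset.pairwise_sort (P : Multiset ℕ) (· ≤ ·)
  unfold mwStar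
  rw [List.pairwise_reverse]
  exact this

lemma mwStar_eq_self {l : List ℕ} (h : l.Pairwise (· ≥ ·)) : mwStar l = l := by
  have hrev : l.reverse.Pairwise (· ≤ ·) := by
    rw [List.pairwise_reverse]; exact h
  have h1 : Multiset.sort (l : Multiset ℕ) (· ≤ ·) = l.reverse :=
    List.Perm.eq_of_pairwise'
      (Multiset.pairwise_sort _ _) hrev
      ((Multiset.coe_eq_coe.mp (Multiset.sort_eq _ _)).trans l.reverse_perm.symm)
  rw [mwStar, h1, List.reverse_reverse]

lemma getD_le_iff_count {L : List ℕ} (h : L.Pairwise (· ≥ ·)) (i t : ℕ) (ht : 0 < t) :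
    t ≤ L.getD i 0 ↔ i < L.countP (fun x => decide (t ≤ x)) := by
  induction L generalizing i with
  | nil => simp; omega
  | cons a L ih =>
    rcases List.pairwise_cons.mp h with ⟨ha, hL⟩
    have hz : ¬ t ≤ a → L.countP (fun x => decide (t ≤ x)) = 0 := by
      intro hta
      rw [List.countP_eq_zero]
      intro b hb
      have := ha b hb
      simp only [decide_eq_true_eq, decide_eq_false_iff_not]
      omega
    cases i with
    | zero =>
      by_cases hta : t ≤ a
      · simp [List.countP_cons, hta]
      · simp [List.countP_cons, hta, hz hta]
    | succ i =>
      have hiff := ih hL i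
      rw [List.getD_cons_succ, List.countP_cons, hiff]
      by_cases hta : t ≤ a
      · simp [hta]
      · rw [hz hta]; simp [hta]

lemma countP_le_set (t : ℕ) :
    ∀ (P : List ℕ) (j : ℕ), j < P.length →
      P.countP (fun x => decide (t ≤ x)) ≤
        (P.set j (P.getD j 0 + 1)).countP (fun x => decide (t ≤ x)) := by
  intro P
  induction P with
  | nil => simp
  | cons a L ih =>
    intro j hj
    cases j with
    | zero =>
      simp only [List.getD_cons_zero, List.set_cons_zero, List.countP_cons]
      have : (if decide (t ≤ a) = true then 1 else 0) ≤
          (if decide (t ≤ a + 1) = true then 1 else 0) := by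
        by_cases h : t ≤ a
        · have h2 : t ≤ a + 1 := by omega
          simp [h, h2]
        · simp [h]
      omega
    | succ j =>
      simp only [List.getD_cons_succ, List.set_cons_succ, List.countP_cons]
      have := ih j (by simpa using hj)
      omega

lemma sum_set : ∀ (P : List ℕ) (j : ℕ), j < P.length →
    (P.set j (P.getD j 0 + 1)).sum = P.sum + 1 := by
  intro P
  induction P with
  | nil => simp
  | cons a L ih =>
    intro j hj
    cases j with
    | zero => simp [List.sum_cons]; omega
    | succ j =>
      simp only [List.getD_cons_succ, List.set_cons_succ, List.sum_cons]
      have := ih j (by simpa using hj)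
      omega

lemma sum_getD : ∀ (L : List ℕ) (n : ℕ), L.length ≤ n →
    ∑ i ∈ Finset.range n, L.getD i 0 = L.sum := by
  intro L
  induction L with
  | nil => intro n _; simp
  | cons a L ih =>
    intro n hn
    match n, hn with
    | n + 1, hn =>
      rw [Finset.sum_range_succ']
      simp only [List.getD_cons_succ, List.getD_cons_zero, List.sum_cons]
      rw [ih n (by simpa using hn)]
      omega

theorem stmt1 :
    (∀ P Q : List ℕ, IsComposition P → IsComposition Q → coverN P Q →
      YoungCover (mwStar P) (mwStar Q)) ∧
    (∀ lam mu : List ℕ, IsPartition lam → IsPartition mu → YoungCover lam mu →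
      ∃ P Q : List ℕ, IsComposition P ∧ IsComposition Q ∧ coverN P Q ∧
        mwStar P = lam ∧ mwStar Q = mu) ∧
    (∀ lam : List ℕ, IsPartition lam → ∃ P : List ℕ, IsComposition P ∧ mwStar P = lam) := by
  refine ⟨?_, ?_, ?_⟩
  · -- part 1
    intro P Q _ _ hc
    have key : Q.sum = P.sum + 1 ∧
        ∀ t, P.countP (fun x => decide (t ≤ x)) ≤ Q.countP (fun x => decide (t ≤ x)) := by
      rcases hc with rfl | rfl | ⟨j, hj, rfl⟩
      · exact ⟨by simp; omega, fun t => by rw [List.countP_cons]; omega⟩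
      · exact ⟨by simp [List.sum_append], fun t => by rw [List.countP_append]; omega⟩
      · exact ⟨sum_set P j hj, fun t => countP_le_set t P j hj⟩
    refine ⟨?_, ?_⟩
    · rw [(mwStar_perm Q).sum_eq, (mwStar_perm P).sum_eq]; exact key.1
    · intro i
      rcases Nat.eq_zero_or_pos ((mwStar P).getD i 0) with h0 | h0
      · omega
      · have h1 := (getD_le_iff_count (mwStar_sorted P) i _ h0).mp le_rfl
        refine (getD_le_iff_count (mwStar_sorted Q) i _ h0).mpr ?_
        calc i < (mwStar P).countP (fun x => decide ((mwStar P).getD i 0 ≤ x)) := h1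
          _ = P.countP _ := (mwStar_perm P).countP_eq _
          _ ≤ Q.countP _ := key.2 _
          _ = (mwStar Q).countP _ := ((mwStar_perm Q).countP_eq _).symm
  · -- part 2
    intro lam mu hlam hmu hYC
    obtain ⟨hsum, hle⟩ := hYC
    set n := lam.length with hn
    set m := mu.length with hm
    have hpos_lam : ∀ i, i < n → 0 < lam.getD i 0 := by
      intro i hi
      rw [List.getD_eq_getElem _ _ hi]
      exact hlam.1 _ (List.getElem_mem hi)
    have hpos_mu : ∀ i, i < m → 0 < mu.getD i 0 := by
      intro i hi
      rw [List.getD_eq_getElem _ _ hi]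
      exact hmu.1 _ (List.getElem_mem hi)
    have hlam0 : ∀ i, n ≤ i → lam.getD i 0 = 0 := fun i hi => List.getD_eq_default _ _ hi
    have hmu0 : ∀ i, m ≤ i → mu.getD i 0 = 0 := fun i hi => List.getD_eq_default _ _ hi
    have hnm : n ≤ m := by
      by_contra h
      push_neg at h
      have h1 := hpos_lam m h
      have h2 := hmu0 m le_rfl
      have := hle m
      omega
    have hsl : ∑ i ∈ Finset.range m, lam.getD i 0 = lam.sum := sum_getD lam m hnm
    have hsm : ∑ i ∈ Finset.range m, mu.getD i 0 = mu.sum := sum_getD mu m le_rfl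
    have hsplit : ∑ i ∈ Finset.range m, mu.getD i 0 =
        ∑ i ∈ Finset.range m, lam.getD i 0 +
          ∑ i ∈ Finset.range m, (mu.getD i 0 - lam.getD i 0) := by
      rw [← Finset.sum_add_distrib]
      refine Finset.sum_congr rfl fun i _ => ?_
      have := hle i
      omega
    have hf1 : ∑ i ∈ Finset.range m, (mu.getD i 0 - lam.getD i 0) = 1 := by omega
    have hex : ∃ j ∈ Finset.range m, mu.getD j 0 - lam.getD j 0 ≠ 0 := by
      by_contra h
      push_neg at h
      rw [Finset.sum_eq_zero h] at hf1
      omega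
    obtain ⟨j, hjm, hj0⟩ := hex
    have hjm' : j < m := Finset.mem_range.mp hjm
    have hjle : mu.getD j 0 - lam.getD j 0 ≤ 1 :=
      hf1 ▸ Finset.single_le_sum (f := fun i => mu.getD i 0 - lam.getD i 0)
        (fun i _ => Nat.zero_le _) hjm
    have hj1 : mu.getD j 0 = lam.getD j 0 + 1 := by
      have := hle j
      omega
    have hrest : ∀ i, i ≠ j → mu.getD i 0 = lam.getD i 0 := by
      intro i hij
      by_cases him : i < m
      · have hsub : ({i, j} : Finset ℕ) ⊆ Finset.range m := by
          intro x hx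
          simp only [Finset.mem_insert, Finset.mem_singleton] at hx
          rcases hx with rfl | rfl <;> exact Finset.mem_range.mpr (by omega)
        have hps := Finset.sum_le_sum_of_subset (f := fun i => mu.getD i 0 - lam.getD i 0) hsub
        rw [Finset.sum_pair hij, hf1] at hps
        have := hle i
        omega
      · have h1 := hmu0 i (by omega)
        have := hle i
        omega
    refine ⟨lam, mu, hlam.1, hmu.1, ?_, mwStar_eq_self hlam.2, mwStar_eq_self hmu.2⟩
    by_cases hjn : j < n
    · -- increase part j
      have hmn : m = n := by
        by_contra h
        have h1 := hrest (m - 1) (by omega)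
        have h2 := hpos_mu (m - 1) (by omega)
        have h3 := hlam0 (m - 1) (by omega)
        omega
      refine Or.inr (Or.inr ⟨j, hjn, ?_⟩)
      apply List.ext_getElem
      · rw [List.length_set]; omega
      · intro i h1 h2
        rw [List.getElem_set]
        split_ifs with hji
        · subst hji
          rw [← List.getD_eq_getElem _ _ (by omega : j < m)]
          exact hj1
        · rw [← List.getD_eq_getElem _ _ h1,
            ← List.getD_eq_getElem _ _ (by rw [List.length_set] at h2; exact h2)]
          exact hrest i (fun h => hji h.symm)
    · -- append a 1
      have hm1 : m = n + 1 := by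
        by_contra h
        have hnm' : n < m := by omega
        rcases eq_or_ne j n with hjn' | hjn'
        · have h1 := hrest (n + 1) (by omega)
          have h2 := hpos_mu (n + 1) (by omega)
          have h3 := hlam0 (n + 1) (by omega)
          omega
        · have h1 := hrest n (Ne.symm hjn')
          have h2 := hpos_mu n (by omega)
          have h3 := hlam0 n (by omega)
          omega
      have hjn'' : j = n := by omega
      refine Or.inr (Or.inl ?_)
      apply List.ext_getElem
      · simp [← hm, ← hn, hm1]
      · intro i h1 h2
        rcases Nat.lt_or_ge i n with hin | hin
        · rw [List.getElem_append_left (by omega)]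
          rw [← List.getD_eq_getElem _ _ h1, ← List.getD_eq_getElem _ _ hin]
          exact hrest i (by omega)
        · rw [List.getElem_append_right (by exact hin)]
          have hlen : (lam ++ [1]).length = n + 1 := by simp [← hn]
          have hi_eq : i = n := by rw [hlen] at h2; omega
          have h5 : mu.getD i 0 = 1 := by
            rw [hi_eq, ← hjn'', hj1, hlam0 j (by omega)]
          rw [← List.getD_eq_getElem _ _ h1, h5]
          have h6 : i - lam.length = 0 := by rw [← hn]; omega
          simp [h6]
  · -- part 3
    intro lam hlam
    exact ⟨lam, hlam.1, mwStar_eq_self hlam.2⟩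
end

section
/- Let α be a composition with r parts and let f_k = f_k^α[𝔑] be the generating function in ℤ[[x_1,…,x_k]] for saturated chains in 𝔑 of width k starting from α. Then f_k = 0 for k < r, and f_r = v(α) + (x_1 + ⋯ + x_r)·f_r. For k > r: if α is not all-ones then f_k = x_1·Λ(f_{k−1}) + x_k·f_{k−1} + (x_1 + ⋯ + x_k)·f_k, and if α is all-ones then f_k = x_1·Λ(f_{k−1}) + x_k·f_{k−1} + (x_1 + ⋯ + x_k)·f_k − x_1x_2⋯x_k. -/
/-- The number of saturated chains from `α` to `Q` with respect to the covering
relation `cover`: chains are recorded as the list of their elements. -/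
noncomputable def numChains (cover : List ℕ → List ℕ → Prop) (α Q : List ℕ) : ℕ :=
  Nat.card {c : List (List ℕ) //
    c.Chain' cover ∧ c.head? = some α ∧ c.getLast? = some Q}

open Classical in
/-- The generating function `f_k^α`: the formal power series in the variables
`x_1, …, x_k` (variables indexed by positive naturals) whose coefficient of
`x_1^{q_1} ⋯ x_k^{q_k}` (all `q_i ≥ 1`) is the number of saturated chains from `α`
to the composition `(q_1, …, q_k)`; all other coefficients are `0`. -/
noncomputable def genF (cover : List ℕ → List ℕ → Prop) (α : List ℕ) (k : ℕ) :
    MvPowerSeries ℕ ℤ :=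
  fun m =>
    if (∀ i, m i ≠ 0 ↔ (1 ≤ i ∧ i ≤ k)) then
      (numChains cover α ((List.range k).map (fun i => m (i + 1))) : ℤ)
    else 0

/-- The power series `v(α) = x_1^{a_1} ⋯ x_s^{a_s}` for a composition `α = (a_1,…,a_s)`. -/
noncomputable def vPS (α : List ℕ) : MvPowerSeries ℕ ℤ :=
  ∏ i ∈ Finset.range α.length, (MvPowerSeries.X (i + 1) : MvPowerSeries ℕ ℤ) ^ α.getD i 0

open Classical in
/-- Renaming of variables along an injective map, for multivariate power series. -/
noncomputable def psRename (σ : ℕ → ℕ) (hσ : Function.Injective σ)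
    (f : MvPowerSeries ℕ ℤ) : MvPowerSeries ℕ ℤ :=
  fun m =>
    if (∀ i ∈ m.support, i ∈ Set.range σ) then
      f (Finsupp.comapDomain σ m hσ.injOn)
    else 0

/-- `Λ`: every variable index is shifted up by one, `Λ(f)(x_1,…,x_k) = f(x_2,…,x_k)`. -/
noncomputable def LamPS : MvPowerSeries ℕ ℤ → MvPowerSeries ℕ ℤ :=
  psRename (· + 1) (add_left_injective 1)

/-- `Λ_i`: each variable `x_m` with `m ≥ i` is replaced by `x_{m+1}`. -/
noncomputable def LamIPS (i : ℕ) : MvPowerSeries ℕ ℤ → MvPowerSeries ℕ ℤ :=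
  psRename (fun m => if i ≤ m then m + 1 else m)
    (fun a b h => by dsimp at h; split_ifs at h <;> omega)

/-- `Δ_i^d(f)`: the sum of the terms of `f` whose degree in `x_i` is exactly `d`. -/
noncomputable def DeltaPS (i d : ℕ) (f : MvPowerSeries ℕ ℤ) : MvPowerSeries ℕ ℤ :=
  fun m => if m i = d then f m else 0

lemma sum_set_getD : ∀ (P : List ℕ) (j : ℕ), j < P.length → ∀ a : ℕ,
    (P.set j a).sum + P.getD j 0 = P.sum + a
  | [], j, hj, a => by simp at hj
  | x :: t, 0, _, a => by simp [Nat.add_comm, Nat.add_left_comm]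
  | x :: t, j+1, hj, a => by
      simp only [List.set_cons_succ, List.sum_cons, List.getD_cons_succ]
      have := sum_set_getD t j (by simpa using hj) a
      omega

lemma coverN_sum {P Q : List ℕ} (h : coverN P Q) : Q.sum = P.sum + 1 := by
  rcases h with h | h | ⟨j, hj, h⟩
  · simp [h, Nat.add_comm]
  · simp [h]
  · subst h
    have := sum_set_getD P j hj (P.getD j 0 + 1)
    omega

lemma coverN_length {P Q : List ℕ} (h : coverN P Q) :
    P.length ≤ Q.length ∧ Q.length ≤ P.length + 1 := by
  rcases h with h | h | ⟨j, hj, h⟩ <;> subst h <;> simp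

lemma coverN_comp {P Q : List ℕ} (h : coverN P Q) (hP : IsComposition P) : IsComposition Q := by
  rcases h with h | h | ⟨j, hj, h⟩ <;> subst h <;> intro x hx
  · rcases List.mem_cons.1 hx with h | h
    · omega
    · exact hP x h
  · rcases List.mem_append.1 hx with h | h
    · exact hP x h
    · simp at h; omega
  · rcases List.mem_or_eq_of_mem_set hx with h | h
    · exact hP x h
    · omega

/-- preservation of having a big part, for compositions -/
lemma coverN_big {P Q : List ℕ} (h : coverN P Q) (hP : IsComposition P)
    (hb : ∃ x ∈ P, 2 ≤ x) : ∃ x ∈ Q, 2 ≤ x := by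
  rcases h with h | h | ⟨j, hj, h⟩ <;> subst h
  · obtain ⟨x, hx, h2⟩ := hb; exact ⟨x, List.mem_cons_of_mem _ hx, h2⟩
  · obtain ⟨x, hx, h2⟩ := hb; exact ⟨x, List.mem_append_left _ hx, h2⟩
  · have h1 : (P.set j (P.getD j 0 + 1))[j]'(by simpa using hj) = P.getD j 0 + 1 := by
      simp
    refine ⟨(P.set j (P.getD j 0 + 1))[j]'(by simpa using hj), List.getElem_mem _, ?_⟩
    have : 0 < P.getD j 0 := by
      have := hP (P.getD j 0) ?_
      · exact this
      · rw [List.getD_eq_getElem _ _ hj]; exact List.getElem_mem _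
    omega

abbrev RTG := Relation.ReflTransGen coverN

lemma rtg_sum {P Q : List ℕ} (h : RTG P Q) : P.sum ≤ Q.sum := by
  induction h with
  | refl => exact le_refl _
  | tail _ hc ih => have := coverN_sum hc; omega

lemma rtg_length {P Q : List ℕ} (h : RTG P Q) : P.length ≤ Q.length := by
  induction h with
  | refl => exact le_refl _
  | tail _ hc ih => have := (coverN_length hc).1; omega

lemma rtg_len_sum {P Q : List ℕ} (h : RTG P Q) :
    P.sum + Q.length ≤ Q.sum + P.length := by
  induction h with
  | refl => exact le_refl _
  | tail _ hc ih =>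
      have h1 := coverN_sum hc; have h2 := (coverN_length hc).2; omega

lemma rtg_comp {P Q : List ℕ} (h : RTG P Q) (hP : IsComposition P) : IsComposition Q := by
  induction h with
  | refl => exact hP
  | tail _ hc ih => exact coverN_comp hc ih

lemma rtg_big {P Q : List ℕ} (h : RTG P Q) (hP : IsComposition P)
    (hb : ∃ x ∈ P, 2 ≤ x) : ∃ x ∈ Q, 2 ≤ x := by
  induction h with
  | refl => exact hb
  | tail hst hc ih => exact coverN_big hc (rtg_comp hst hP) ih

def ChainSet (α Q : List ℕ) : Set (List (List ℕ)) :=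
  {c | c.Chain' coverN ∧ c.head? = some α ∧ c.getLast? = some Q}

lemma chain_pairwise {c : List (List ℕ)} (h : c.Chain' coverN) : c.Pairwise RTG := by
  have : c.Chain' RTG := h.imp fun _ _ hab => Relation.ReflTransGen.single hab
  exact List.isChain_iff_pairwise.mp this

lemma mem_chainSet_rtg {α Q : List ℕ} {c : List (List ℕ)} (hc : c ∈ ChainSet α Q) :
    ∀ R ∈ c, RTG α R ∧ RTG R Q := by
  obtain ⟨h1, h2, h3⟩ := hc
  have hp := chain_pairwise h1
  obtain ⟨t, rfl⟩ : ∃ t, c = α :: t := by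
    cases c with
    | nil => simp at h2
    | cons a t => simp at h2; exact ⟨t, by rw [h2]⟩
  have hne : (α :: t) ≠ [] := by simp
  have hQl : (α :: t).getLast hne = Q := by
    rwa [List.getLast?_eq_getLast hne, Option.some_inj] at h3
  intro R hR
  constructor
  · rcases List.mem_cons.1 hR with rfl | hR
    · exact Relation.ReflTransGen.refl
    · exact List.rel_of_pairwise_cons hp hR
  · -- R before Q: use c = dropLast ++ [last]
    have hsplit := List.dropLast_append_getLast (l := α :: t) hne
    rw [hQl] at hsplit
    rw [← hsplit] at hp hR
    rcases List.mem_append.1 hR with hR | hR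
    · exact (List.pairwise_append.mp hp).2.2 R hR Q (by simp)
    · simp at hR; subst hR; exact Relation.ReflTransGen.refl

lemma rtg_of_chainSet_mem {α Q : List ℕ} {c : List (List ℕ)} (hc : c ∈ ChainSet α Q) :
    RTG α Q := by
  obtain ⟨h1, h2, h3⟩ := hc
  cases c with
  | nil => simp at h2
  | cons a t =>
      have := mem_chainSet_rtg (α := α) (Q := Q) ⟨h1, h2, h3⟩ a (by simp)
      simp at h2; subst h2; exact this.2

lemma finite_lists {X : Type*} (S : Set X) (hS : S.Finite) :
    ∀ n : ℕ, {l : List X | l.length ≤ n ∧ ∀ x ∈ l, x ∈ S}.Finite := by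
  intro n
  induction n with
  | zero =>
      apply Set.Finite.subset (Set.finite_singleton ([] : List X))
      rintro l ⟨h1, -⟩
      simp only [Nat.le_zero, List.length_eq_zero_iff] at h1
      simp [h1]
  | succ n ih =>
      apply Set.Finite.subset (Set.Finite.union (Set.finite_singleton ([] : List X))
        (Set.Finite.image2 List.cons hS ih))
      rintro l ⟨h1, h2⟩
      cases l with
      | nil => exact Or.inl rfl
      | cons x t =>
          refine Or.inr (Set.mem_image2_of_mem (h2 x (by simp)) ⟨?_, ?_⟩)
          · simpa using h1
          · exact fun y hy => h2 y (List.mem_cons_of_mem _ hy)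

lemma chainSet_finite (α Q : List ℕ) : (ChainSet α Q).Finite := by
  set S : Set (List ℕ) :=
    {R | R.length ≤ Q.sum + α.length ∧ ∀ x ∈ R, x ∈ Set.Iic Q.sum} with hSdef
  have hSfin : S.Finite := finite_lists _ (Set.finite_Iic _) _
  apply Set.Finite.subset (finite_lists S hSfin (Q.sum + 1))
  intro c hc
  have hmem := mem_chainSet_rtg hc
  constructor
  · -- length bound via injectivity of sums
    have hchain : (c.map List.sum).Chain' (· < ·) := by
      show List.IsChain _ (c.map List.sum)
      rw [List.isChain_map]
      exact hc.1.imp fun _ _ h => by have := coverN_sum h; omega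
    have hnodup : (c.map List.sum).Nodup :=
      List.Pairwise.imp ne_of_lt (List.isChain_iff_pairwise.mp hchain)
    have hsub : (c.map List.sum).toFinset ⊆ Finset.range (Q.sum + 1) := by
      intro x hx
      rw [List.mem_toFinset, List.mem_map] at hx
      obtain ⟨R, hR, rfl⟩ := hx
      have := rtg_sum (hmem R hR).2
      simp; omega
    have := Finset.card_le_card hsub
    rw [List.toFinset_card_of_nodup hnodup, Finset.card_range] at this
    simpa using this
  · intro R hR
    obtain ⟨h1, h2⟩ := hmem R hR
    have e1 := rtg_sum h2
    have e2 := rtg_len_sum h1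
    exact ⟨by omega, fun x hx => by
      have := List.le_sum_of_mem hx
      simp only [Set.mem_Iic]; omega⟩


lemma set_getD_self : ∀ (P : List ℕ) (j : ℕ), j < P.length → P.set j (P.getD j 0) = P
  | [], j, hj => by simp at hj
  | x :: t, 0, _ => by simp
  | x :: t, j+1, hj => by
      simp only [List.set_cons_succ, List.getD_cons_succ]
      rw [set_getD_self t j (by simpa using hj)]

lemma getD_set_self (P : List ℕ) (j : ℕ) (hj : j < P.length) (v : ℕ) :
    (P.set j v).getD j 0 = v := by
  rw [List.getD_eq_getElem _ _ (by simpa using hj)]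
  simp

open Classical in
lemma ncard_finset_biUnion {ι X : Type*} (s : Finset ι) (f : ι → Set X)
    (hf : ∀ i ∈ s, (f i).Finite)
    (hd : ∀ i ∈ s, ∀ j ∈ s, i ≠ j → Disjoint (f i) (f j)) :
    (⋃ i ∈ s, f i).ncard = ∑ i ∈ s, (f i).ncard := by
  classical
  induction s using Finset.induction with
  | empty => simp
  | @insert a s ha ih =>
      rw [Finset.set_biUnion_insert, Finset.sum_insert ha,
        Set.ncard_union_eq ?_ (hf a (by simp)) ?_, ih]
      · exact fun i hi => hf i (by simp [hi])
      · exact fun i hi j hj hij => hd i (by simp [hi]) j (by simp [hj]) hij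
      · rw [Set.disjoint_iff_inter_eq_empty, Set.inter_iUnion₂]
        apply Set.eq_empty_iff_forall_notMem.mpr
        intro x hx
        rw [Set.mem_iUnion₂] at hx
        obtain ⟨i, hi, hx⟩ := hx
        have hd' := hd a (by simp) i (by simp [hi]) (fun h => ha (h ▸ hi))
        rw [Set.disjoint_iff_inter_eq_empty] at hd'
        rw [hd'] at hx
        exact hx
      · exact Set.Finite.biUnion s.finite_toSet (fun i hi => hf i (by simp; right; exact hi))

lemma numChains_eq_ncard (α Q : List ℕ) :
    numChains coverN α Q = (ChainSet α Q).ncard := rfl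

lemma getD_set_ne (P : List ℕ) (j j' : ℕ) (h : j' ≠ j) (hj : j < P.length) (v : ℕ) :
    (P.set j' v).getD j 0 = P.getD j 0 := by
  rw [List.getD_eq_getElem _ _ (by simpa using hj), List.getD_eq_getElem _ _ hj]
  exact List.getElem_set_ne h _

lemma numChains_rec (α Q : List ℕ) :
    numChains coverN α Q =
      (if Q = α then 1 else 0)
      + (if Q.head? = some 1 then numChains coverN α Q.tail else 0)
      + (if Q.getLast? = some 1 ∧ Q ≠ 1 :: Q.dropLast then numChains coverN α Q.dropLast else 0)
      + ∑ j ∈ Finset.range Q.length,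
          (if 1 ≤ Q.getD j 0 then numChains coverN α (Q.set j (Q.getD j 0 - 1)) else 0) := by
  classical
  set app : List (List ℕ) → List (List ℕ) := fun c => c ++ [Q] with happ
  have happ_inj : Function.Injective app := List.append_left_injective [Q]
  set U0 : Set (List (List ℕ)) := if Q = α then {[Q]} else ∅ with hU0
  set UA : Set (List (List ℕ)) :=
    if Q.head? = some 1 then app '' ChainSet α Q.tail else ∅ with hUA
  set UB : Set (List (List ℕ)) :=
    if Q.getLast? = some 1 ∧ Q ≠ 1 :: Q.dropLast then app '' ChainSet α Q.dropLast else ∅ with hUB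
  set UCf : ℕ → Set (List (List ℕ)) := fun j =>
    if 1 ≤ Q.getD j 0 then app '' ChainSet α (Q.set j (Q.getD j 0 - 1)) else ∅ with hUCf
  -- covers
  have covA : Q.head? = some 1 → coverN Q.tail Q := by
    intro h
    left
    cases Q with
    | nil => simp at h
    | cons q t => simp at h; simp [h]
  have covB : Q.getLast? = some 1 → coverN Q.dropLast Q := by
    intro h
    right; left
    have hne : Q ≠ [] := by rintro rfl; simp at h
    conv_lhs => rw [← List.dropLast_append_getLast hne]
    rw [List.getLast?_eq_getLast hne, Option.some_inj] at h
    rw [h]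
  have covC : ∀ j, j < Q.length → 1 ≤ Q.getD j 0 → coverN (Q.set j (Q.getD j 0 - 1)) Q := by
    intro j hj h1
    right; right
    refine ⟨j, by simpa using hj, ?_⟩
    rw [getD_set_self Q j hj, List.set_set]
    have h2 : Q.getD j 0 - 1 + 1 = Q.getD j 0 := by omega
    rw [h2, set_getD_self Q j hj]
  -- appending Q to a chain ending at a predecessor gives a chain ending at Q
  have memChainApp : ∀ (P : List ℕ), coverN P Q → ∀ c' ∈ ChainSet α P, app c' ∈ ChainSet α Q := by
    rintro P hcov c' ⟨h1, h2, h3⟩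
    have hne : c' ≠ [] := by rintro rfl; simp at h2
    refine ⟨?_, ?_, ?_⟩
    · show List.IsChain _ (c' ++ [Q])
      rw [List.isChain_append]
      refine ⟨h1, List.isChain_singleton _, ?_⟩
      intro x hx y hy
      simp only [List.head?_cons, Option.mem_def, Option.some_inj] at hy
      rw [h3] at hx
      simp only [Option.mem_def, Option.some_inj] at hx
      subst hx; subst hy; exact hcov
    · show (c' ++ [Q]).head? = some α
      rw [List.head?_append_of_ne_nil _ hne]
      exact h2
    · show (c' ++ [Q]).getLast? = some Q
      exact List.getLast?_concat
  -- key info from image membership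
  have keyA : ∀ (P : List ℕ) c, c ∈ app '' ChainSet α P →
      c.dropLast ≠ [] ∧ c.dropLast.getLast? = some P := by
    rintro P c ⟨c', hc', rfl⟩
    have hne : c' ≠ [] := by rintro rfl; exact absurd hc'.2.1 (by simp)
    constructor
    · show (c' ++ [Q]).dropLast ≠ []
      rw [List.dropLast_concat]; exact hne
    · show (c' ++ [Q]).dropLast.getLast? = some P
      rw [List.dropLast_concat]; exact hc'.2.2
  have disjImages : ∀ P P' : List ℕ, P ≠ P' →
      Disjoint (app '' ChainSet α P) (app '' ChainSet α P') := by
    intro P P' hne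
    rw [Set.disjoint_left]
    intro c hc hc'
    have h1 := (keyA P c hc).2
    have h2 := (keyA P' c hc').2
    rw [h1] at h2
    exact hne (Option.some_inj.mp h2)
  -- decomposition
  have hdecomp : ChainSet α Q =
      ((U0 ∪ UA) ∪ UB) ∪ ⋃ j ∈ Finset.range Q.length, UCf j := by
    apply Set.eq_of_subset_of_subset
    · intro c hc
      obtain ⟨h1, h2, h3⟩ := hc
      have hsplit : c.dropLast ++ [Q] = c := List.dropLast_append_getLast? Q h3
      by_cases hdc : c.dropLast = []
      · -- c = [Q]
        rw [hdc, List.nil_append] at hsplit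
        have hQα : Q = α := by
          rw [← hsplit] at h2; simpa using h2
        refine Or.inl (Or.inl (Or.inl ?_))
        rw [hU0, if_pos hQα]
        simp [← hsplit]
      · set c' := c.dropLast with hc'def
        rw [← hsplit] at h1 h2
        change List.IsChain _ (c' ++ [Q]) at h1
        rw [List.isChain_append] at h1
        obtain ⟨h1a, -, h1c⟩ := h1
        have hlast : c'.getLast? = some (c'.getLast hdc) := List.getLast?_eq_getLast hdc
        set P := c'.getLast hdc with hPdef
        have hcov : coverN P Q := h1c P hlast Q (by simp)
        have h2' : c'.head? = some α := by
          rwa [List.head?_append_of_ne_nil _ hdc] at h2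
        have hc'mem : c' ∈ ChainSet α P := ⟨h1a, h2', hlast⟩
        by_cases hQ1 : Q = 1 :: P
        · refine Or.inl (Or.inl (Or.inr ?_))
          rw [hUA, if_pos (by rw [hQ1]; rfl)]
          refine ⟨c', ?_, hsplit⟩
          have : Q.tail = P := by rw [hQ1]; rfl
          rwa [this]
        · rcases hcov with h | h | ⟨j, hj, h⟩
          · exact absurd h hQ1
          · refine Or.inl (Or.inr ?_)
            have hdl : Q.dropLast = P := by rw [h]; exact List.dropLast_concat
            rw [hUB, if_pos ⟨by rw [h]; exact List.getLast?_concat, by rw [hdl]; exact hQ1⟩]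
            refine ⟨c', ?_, hsplit⟩
            rwa [hdl]
          · refine Or.inr ?_
            have hjQ : j < Q.length := by rw [h]; simpa using hj
            have hgd : Q.getD j 0 = P.getD j 0 + 1 := by
              rw [h]; exact getD_set_self P j hj _
            have hset : Q.set j (Q.getD j 0 - 1) = P := by
              rw [hgd, h, Nat.add_sub_cancel, List.set_set, set_getD_self P j hj]
            refine Set.mem_biUnion (Finset.mem_range.mpr hjQ) ?_
            rw [hUCf]
            simp only
            rw [if_pos (by omega), hset]
            exact ⟨c', hc'mem, hsplit⟩
    · -- reverse inclusion
      refine Set.union_subset (Set.union_subset (Set.union_subset ?_ ?_) ?_) ?_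
      · rw [hU0]; split_ifs with h
        · rintro c hc
          rw [Set.mem_singleton_iff] at hc
          subst hc
          exact ⟨List.isChain_singleton _, by simp [h], by simp⟩
        · simp
      · rw [hUA]; split_ifs with h
        · rintro c ⟨c', hc', rfl⟩
          exact memChainApp _ (covA h) c' hc'
        · simp
      · rw [hUB]; split_ifs with h
        · rintro c ⟨c', hc', rfl⟩
          exact memChainApp _ (covB h.1) c' hc'
        · simp
      · intro c hc
        rw [Set.mem_iUnion₂] at hc
        obtain ⟨j, hj, hc⟩ := hc
        rw [hUCf] at hc
        simp only at hc
        split_ifs at hc with h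
        · obtain ⟨c', hc', rfl⟩ := hc
          exact memChainApp _ (covC j (Finset.mem_range.mp hj) h) c' hc'
        · simp at hc
  -- finiteness of pieces
  have finImg : ∀ P : List ℕ, (app '' ChainSet α P).Finite :=
    fun P => (chainSet_finite α P).image _
  have fin0 : U0.Finite := by rw [hU0]; split_ifs <;> simp
  have finA : UA.Finite := by rw [hUA]; split_ifs <;> [exact finImg _; simp]
  have finB : UB.Finite := by rw [hUB]; split_ifs <;> [exact finImg _; simp]
  have finC : ∀ j, (UCf j).Finite := by
    intro j; rw [hUCf]; simp only; split_ifs <;> [exact finImg _; simp]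
  have finUC : (⋃ j ∈ Finset.range Q.length, UCf j).Finite :=
    Set.Finite.biUnion (Finset.range Q.length).finite_toSet (fun j _ => finC j)
  -- disjointness
  have len0 : ∀ c ∈ U0, c.dropLast = [] := by
    intro c hc; rw [hU0] at hc; split_ifs at hc with h
    · rw [Set.mem_singleton_iff] at hc; subst hc; simp
    · simp at hc
  have d0A : Disjoint U0 UA := by
    rw [Set.disjoint_left]; intro c hc hc'
    rw [hUA] at hc'; split_ifs at hc' with h
    · exact (keyA _ c hc').1 (len0 c hc)
    · simp at hc'
  have d0B : Disjoint U0 UB := by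
    rw [Set.disjoint_left]; intro c hc hc'
    rw [hUB] at hc'; split_ifs at hc' with h
    · exact (keyA _ c hc').1 (len0 c hc)
    · simp at hc'
  have d0C : ∀ j, Disjoint U0 (UCf j) := by
    intro j
    rw [Set.disjoint_left]; intro c hc hc'
    rw [hUCf] at hc'; simp only at hc'; split_ifs at hc' with h
    · exact (keyA _ c hc').1 (len0 c hc)
    · simp at hc'
  have dAB : Disjoint UA UB := by
    rw [hUA, hUB]
    split_ifs with h h'
    · apply disjImages
      intro heq
      have : Q = 1 :: Q.dropLast := by
        conv_lhs => rw [← List.cons_head?_tail h]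
        rw [heq]
      exact h'.2 this
    · simp
    · simp
    · simp
  have dAC : ∀ j, j < Q.length → Disjoint UA (UCf j) := by
    intro j hj
    rw [hUA, hUCf]; simp only
    split_ifs with h h'
    · apply disjImages
      intro heq
      have hne : Q ≠ [] := by rintro rfl; simp at h
      have := congrArg List.length heq
      simp [List.length_tail] at this
      omega
    · simp
    · simp
    · simp
  have dBC : ∀ j, j < Q.length → Disjoint UB (UCf j) := by
    intro j hj
    rw [hUB, hUCf]; simp only
    split_ifs with h h'
    · apply disjImages
      intro heq
      have hne : Q ≠ [] := by rintro rfl; simp at h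
      have := congrArg List.length heq
      simp [List.length_dropLast] at this
      have : Q.length - 1 = Q.length := this
      have hlen : 0 < Q.length := List.length_pos_iff.mpr hne
      omega
    · simp
    · simp
    · simp
  have dCC : ∀ j ∈ Finset.range Q.length, ∀ j' ∈ Finset.range Q.length, j ≠ j' →
      Disjoint (UCf j) (UCf j') := by
    intro j hj j' hj' hne
    rw [Finset.mem_range] at hj hj'
    rw [hUCf]; simp only
    split_ifs with h h'
    · apply disjImages
      intro heq
      have e1 : (Q.set j (Q.getD j 0 - 1)).getD j 0 = Q.getD j 0 - 1 := getD_set_self Q j hj _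
      have e2 : (Q.set j' (Q.getD j' 0 - 1)).getD j 0 = Q.getD j 0 :=
        getD_set_ne Q j j' (Ne.symm hne) hj _
      rw [heq, e2] at e1
      omega
    · simp
    · simp
    · simp
  -- counting
  rw [numChains_eq_ncard, hdecomp]
  rw [Set.ncard_union_eq ?_ ((fin0.union finA).union finB) finUC]
  · rw [Set.ncard_union_eq ?_ (fin0.union finA) finB]
    · rw [Set.ncard_union_eq d0A fin0 finA]
      have e0 : U0.ncard = if Q = α then 1 else 0 := by
        rw [hU0]; split_ifs <;> simp
      have eA : UA.ncard = if Q.head? = some 1 then numChains coverN α Q.tail else 0 := by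
        rw [hUA]; split_ifs with h
        · rw [Set.ncard_image_of_injective _ happ_inj, numChains_eq_ncard]
        · simp
      have eB : UB.ncard = if Q.getLast? = some 1 ∧ Q ≠ 1 :: Q.dropLast then
          numChains coverN α Q.dropLast else 0 := by
        rw [hUB]; split_ifs with h
        · rw [Set.ncard_image_of_injective _ happ_inj, numChains_eq_ncard]
        · simp
      have eC : (⋃ j ∈ Finset.range Q.length, UCf j).ncard =
          ∑ j ∈ Finset.range Q.length,
            (if 1 ≤ Q.getD j 0 then numChains coverN α (Q.set j (Q.getD j 0 - 1)) else 0) := by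
        rw [ncard_finset_biUnion _ _ (fun j _ => finC j) dCC]
        apply Finset.sum_congr rfl
        intro j hj
        rw [hUCf]; simp only; split_ifs with h
        · rw [Set.ncard_image_of_injective _ happ_inj, numChains_eq_ncard]
        · simp
      rw [e0, eA, eB, eC]
    · exact Set.disjoint_union_left.mpr ⟨d0B, dAB⟩
  · apply Set.disjoint_iUnion₂_right.mpr  -- guess name
    intro j hj
    have hjr := Finset.mem_range.mp hj
    exact Set.disjoint_union_left.mpr
      ⟨Set.disjoint_union_left.mpr ⟨d0C j, dAC j hjr⟩, dBC j hjr⟩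

lemma numChains_eq_zero {α Q : List ℕ} (h : ¬ RTG α Q) : numChains coverN α Q = 0 := by
  rw [numChains_eq_ncard]
  have : ChainSet α Q = ∅ := by
    rw [Set.eq_empty_iff_forall_notMem]
    exact fun c hc => h (rtg_of_chainSet_mem hc)
  rw [this, Set.ncard_empty]

lemma lemA {α Q : List ℕ} (h : Q.length < α.length) : numChains coverN α Q = 0 :=
  numChains_eq_zero (fun hr => absurd (rtg_length hr) (by omega))

lemma lemB {α Q : List ℕ} (hα : IsComposition α) (h : ¬ IsComposition Q) :
    numChains coverN α Q = 0 :=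
  numChains_eq_zero (fun hr => h (rtg_comp hr hα))

lemma lemC {α Q : List ℕ} (hα : IsComposition α) (h2 : ∃ x ∈ α, 2 ≤ x)
    (hQ : ∀ x ∈ Q, x = 1) : numChains coverN α Q = 0 := by
  apply numChains_eq_zero
  intro hr
  obtain ⟨x, hx, hx2⟩ := rtg_big hr hα h2
  have := hQ x hx
  omega

lemma lemD (r : ℕ) : ∀ m, r ≤ m →
    numChains coverN (List.replicate r 1) (List.replicate m 1) = 1 := by
  intro m
  induction m with
  | zero =>
      intro hm
      have hr : r = 0 := by omega
      subst hr
      rw [numChains_rec]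
      simp
  | succ m ih =>
      intro hm
      rw [numChains_rec]
      have hrep : IsComposition (List.replicate r 1) := by
        intro x hx; rw [List.eq_of_mem_replicate hx]; omega
      have e1 : (List.replicate (m+1) 1 : List ℕ) = 1 :: List.replicate m 1 :=
        List.replicate_succ
      have h0 : (List.replicate (m+1) 1 = List.replicate r 1) ↔ m + 1 = r := by
        constructor
        · intro h; have := congrArg List.length h; simpa using this
        · intro h; rw [h]
      have hhead : (List.replicate (m+1) 1 : List ℕ).head? = some 1 := by
        rw [e1]; rfl
      have htail : (List.replicate (m+1) 1 : List ℕ).tail = List.replicate m 1 := by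
        rw [e1]; rfl
      have hBcond : ¬((List.replicate (m+1) 1 : List ℕ).getLast? = some 1 ∧
          List.replicate (m+1) 1 ≠ 1 :: (List.replicate (m+1) 1 : List ℕ).dropLast) := by
        rintro ⟨-, hne⟩
        apply hne
        rw [List.replicate_succ' (n := m) (a := (1:ℕ)), List.dropLast_concat, ← List.replicate_succ' (n := m) (a := (1:ℕ)), e1]
      have hsum : ∀ j ∈ Finset.range (List.replicate (m+1) 1 : List ℕ).length,
          (if 1 ≤ (List.replicate (m+1) 1 : List ℕ).getD j 0 then
            numChains coverN (List.replicate r 1)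
              ((List.replicate (m+1) 1 : List ℕ).set j
                ((List.replicate (m+1) 1 : List ℕ).getD j 0 - 1)) else 0) = 0 := by
        intro j hj
        rw [Finset.mem_range] at hj
        simp only [List.length_replicate] at hj
        have hgd : (List.replicate (m+1) 1 : List ℕ).getD j 0 = 1 := by
          rw [List.getD_eq_getElem _ _ (by simpa using hj)]
          simp
        rw [hgd]
        simp only [if_pos (le_refl 1)]
        apply lemB hrep
        intro hcomp
        have h0mem : (0 : ℕ) ∈ (List.replicate (m+1) 1 : List ℕ).set j (1-1) := by
          have : ((List.replicate (m+1) 1 : List ℕ).set j 0)[j]'(by simpa using hj) = 0 := by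
            simp
          rw [← this]
          exact List.getElem_mem _
        have := hcomp 0 (by simpa using h0mem)
        omega
      rw [Finset.sum_congr rfl hsum, Finset.sum_const_zero]
      rw [if_pos hhead, htail, if_neg hBcond]
      by_cases hmr : m + 1 = r
      · rw [if_pos (h0.mpr hmr)]
        have : numChains coverN (List.replicate r 1) (List.replicate m 1) = 0 := by
          apply lemA; simp; omega
        rw [this]
        norm_num
      · rw [if_neg (fun h => hmr (h0.mp h)), ih (by omega)]
        norm_num

lemma coeff_apply' (f : MvPowerSeries ℕ ℤ) (m : ℕ →₀ ℕ) :
    (MvPowerSeries.coeff m) f = f m := rfl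

lemma coeff_X_mul' (i : ℕ) (f : MvPowerSeries ℕ ℤ) (m : ℕ →₀ ℕ) :
    (MvPowerSeries.coeff m) (MvPowerSeries.X i * f) =
      if m i ≠ 0 then f (m - Finsupp.single i 1) else 0 := by
  rw [MvPowerSeries.X, MvPowerSeries.coeff_monomial_mul]
  by_cases h : Finsupp.single i 1 ≤ m
  · rw [if_pos h, if_pos, one_mul, coeff_apply']
    rw [Finsupp.single_le_iff] at h
    omega
  · rw [if_neg h, if_neg]
    rw [Finsupp.single_le_iff] at h
    omega

lemma prod_pow_X {ι : Type*} (s : Finset ι) (h g : ι → ℕ) :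
    (∏ i ∈ s, (MvPowerSeries.X (h i) : MvPowerSeries ℕ ℤ) ^ g i) =
      MvPowerSeries.monomial (∑ i ∈ s, Finsupp.single (h i) (g i)) 1 := by
  classical
  induction s using Finset.cons_induction with
  | empty => simp
  | cons a s ha ih =>
      rw [Finset.prod_cons, Finset.sum_cons, ih, MvPowerSeries.X_pow_eq,
        MvPowerSeries.monomial_mul_monomial, one_mul]

-- list lemmas about (range k).map f
lemma q_tail (k : ℕ) (hk : 1 ≤ k) (f : ℕ → ℕ) :
    ((List.range k).map f).tail = (List.range (k-1)).map (fun i => f (i+1)) := by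
  obtain ⟨k', rfl⟩ : ∃ k', k = k' + 1 := ⟨k - 1, by omega⟩
  rw [List.range_succ_eq_map]
  simp [List.map_map, Function.comp_def, Nat.succ_eq_add_one]

lemma q_head (k : ℕ) (hk : 1 ≤ k) (f : ℕ → ℕ) :
    ((List.range k).map f).head? = some (f 0) := by
  obtain ⟨k', rfl⟩ : ∃ k', k = k' + 1 := ⟨k - 1, by omega⟩
  rw [List.range_succ_eq_map]
  simp

lemma q_dropLast (k : ℕ) (hk : 1 ≤ k) (f : ℕ → ℕ) :
    ((List.range k).map f).dropLast = (List.range (k-1)).map f := by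
  obtain ⟨k', rfl⟩ : ∃ k', k = k' + 1 := ⟨k - 1, by omega⟩
  rw [List.range_succ]
  simp

lemma q_getLast (k : ℕ) (hk : 1 ≤ k) (f : ℕ → ℕ) :
    ((List.range k).map f).getLast? = some (f (k-1)) := by
  obtain ⟨k', rfl⟩ : ∃ k', k = k' + 1 := ⟨k - 1, by omega⟩
  rw [List.range_succ]
  simp [List.getLast?_concat]

lemma q_getD (k j : ℕ) (hj : j < k) (f : ℕ → ℕ) :
    ((List.range k).map f).getD j 0 = f j := by
  rw [List.getD_eq_getElem _ _ (by simpa using hj)]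
  simp

lemma q_set (k j : ℕ) (hj : j < k) (v : ℕ) (f : ℕ → ℕ) :
    ((List.range k).map f).set j v = (List.range k).map (fun i => if i = j then v else f i) := by
  apply List.ext_getElem (by simp)
  intro i h1 h2
  simp only [List.getElem_set, List.getElem_map, List.getElem_range]
  split_ifs with hq hq' hq'
  · rfl
  · omega
  · omega
  · rfl

lemma q_eq_cons_iff (k : ℕ) (hk : 1 ≤ k) (f : ℕ → ℕ) :
    (List.range k).map f = 1 :: ((List.range k).map f).dropLast ↔ ∀ i < k, f i = 1 := by
  rw [q_dropLast k hk f]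
  constructor
  · intro h i hi
    induction i with
    | zero =>
        have e := congrArg (fun l => l.head?) h
        rw [q_head k hk] at e
        simpa using e
    | succ n ihn =>
        have hlt : n < k := by omega
        have hi' : n + 1 < k := hi
        have e := congrArg (fun l => l[n+1]?) h
        simp only [List.getElem?_map] at e
        rw [List.getElem?_cons_succ, List.getElem?_map] at e
        rw [List.getElem?_range hi, List.getElem?_range (by omega : n < k - 1)] at e
        simp only [Option.map_some] at e  -- e : some (f (n+1)) = some (f n)
        have : f (n+1) = f n := by simpa using e
        rw [this]; exact ihn hlt
  · intro h
    obtain ⟨k', rfl⟩ : ∃ k', k = k' + 1 := ⟨k - 1, by omega⟩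
    apply List.ext_getElem (by simp)
    intro i h1 h2
    rcases Nat.eq_zero_or_pos i with rfl | hi
    · simp [h 0 (by omega)]
    · simp only [List.getElem_map, List.getElem_range]
      rw [h i (by simpa using h1)]
      obtain ⟨i', rfl⟩ : ∃ i', i = i' + 1 := ⟨i - 1, by omega⟩
      rw [List.getElem_cons_succ]
      simp only [List.getElem_map, List.getElem_range]
      rw [h i' (by simp at h2; omega)]

-- genF application lemmas
open Classical in
lemma genF_apply (cover) (α : List ℕ) (k : ℕ) (m : ℕ →₀ ℕ) :
    genF cover α k m =
      if (∀ i, m i ≠ 0 ↔ (1 ≤ i ∧ i ≤ k)) then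
        (numChains cover α ((List.range k).map (fun i => m (i + 1))) : ℤ)
      else 0 := rfl

open Classical in
lemma genF_eq_of {α : List ℕ} {k : ℕ} {m : ℕ →₀ ℕ}
    (h : ∀ i, m i ≠ 0 ↔ (1 ≤ i ∧ i ≤ k)) (cover) :
    genF cover α k m = (numChains cover α ((List.range k).map (fun i => m (i + 1))) : ℤ) := by
  rw [genF_apply, if_pos h]

open Classical in
lemma genF_eq_zero {α : List ℕ} {k : ℕ} {m : ℕ →₀ ℕ}
    (h : ¬ (∀ i, m i ≠ 0 ↔ (1 ≤ i ∧ i ≤ k))) (cover) :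
    genF cover α k m = 0 := by
  rw [genF_apply, if_neg h]

lemma sub_single_apply (m : ℕ →₀ ℕ) (i j : ℕ) :
    (m - Finsupp.single i 1 : ℕ →₀ ℕ) j = m j - (if i = j then 1 else 0) := by
  rw [Finsupp.tsub_apply, Finsupp.single_apply]

-- the key "decrement" term computation
lemma sum_term {α : List ℕ} (hα : IsComposition α) (k : ℕ) (m : ℕ →₀ ℕ)
    (Hc : ∀ i, m i ≠ 0 ↔ (1 ≤ i ∧ i ≤ k)) (j : ℕ) (hj : j < k) :
    genF coverN α k (m - Finsupp.single (j+1) 1) =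
      (numChains coverN α
        ((((List.range k).map (fun i => m (i+1))).set j
          ((((List.range k).map (fun i => m (i+1))).getD j 0) - 1))) : ℤ) := by
  rw [q_getD k j hj, q_set k j hj]
  have hne : m (j+1) ≠ 0 := (Hc (j+1)).mpr ⟨by omega, by omega⟩
  by_cases h2 : 2 ≤ m (j+1)
  · have Hc' : ∀ i, (m - Finsupp.single (j+1) 1 : ℕ →₀ ℕ) i ≠ 0 ↔ (1 ≤ i ∧ i ≤ k) := by
      intro i
      rw [sub_single_apply]
      by_cases hij : j + 1 = i
      · subst hij
        rw [if_pos rfl]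
        constructor
        · intro _; exact ⟨by omega, by omega⟩
        · intro _; omega
      · rw [if_neg hij]
        simpa using Hc i
    rw [genF_eq_of Hc']
    congr 2
    apply List.map_congr_left
    intro i hi
    rw [sub_single_apply]
    by_cases hij : i = j
    · rw [if_pos hij, if_pos (by omega : j + 1 = i + 1), hij]
    · rw [if_neg hij, if_neg (by omega : ¬ (j + 1 = i + 1))]
      omega
  · have h1 : m (j+1) = 1 := by omega
    rw [genF_eq_zero (cover := coverN) ?_, lemB hα ?_, Nat.cast_zero]
    · intro hcomp
      have hmem : (0:ℕ) ∈ (List.range k).map (fun i => if i = j then m (j+1) - 1 else m (i+1)) := by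
        rw [List.mem_map]
        exact ⟨j, by simpa using hj, by simp [h1]⟩
      have := hcomp 0 hmem
      omega
    · intro Hc'
      have := (Hc' (j+1)).mpr ⟨by omega, by omega⟩
      rw [sub_single_apply, if_pos rfl] at this
      omega

lemma sum_term_bad {α : List ℕ} (k : ℕ) (m : ℕ →₀ ℕ)
    (Hc : ¬ (∀ i, m i ≠ 0 ↔ (1 ≤ i ∧ i ≤ k))) (i : ℕ) (h1 : 1 ≤ i) (h2 : i ≤ k)
    (hne : m i ≠ 0) :
    genF coverN α k (m - Finsupp.single i 1) = 0 := by
  apply genF_eq_zero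
  intro Hc'
  apply Hc
  intro j
  by_cases hij : i = j
  · subst hij; exact ⟨fun _ => ⟨h1, h2⟩, fun _ => hne⟩
  · have := Hc' j
    rwa [sub_single_apply, if_neg hij, Nat.sub_zero] at this

-- evaluation of finsupp sums of singles
lemma finsupp_sum_single_apply {ι : Type*} (s : Finset ι) (h : ι → ℕ) (g : ι → ℕ) (j : ℕ) :
    (∑ i ∈ s, Finsupp.single (h i) (g i)) j = ∑ i ∈ s, (if h i = j then g i else 0) := by
  rw [Finsupp.finset_sum_apply]
  exact Finset.sum_congr rfl fun i _ => Finsupp.single_apply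

lemma mono_eval (r : ℕ) (g : ℕ → ℕ) (j : ℕ) :
    (∑ i ∈ Finset.range r, Finsupp.single (i+1) (g i)) j =
      if 1 ≤ j ∧ j ≤ r then g (j-1) else 0 := by
  rw [finsupp_sum_single_apply]
  rcases Nat.eq_zero_or_pos j with rfl | hj
  · simp
  · have he : ∀ i ∈ Finset.range r, (if i + 1 = j then g i else 0) =
        (if i = j - 1 then g i else 0) := by
      intro i _
      by_cases h : i + 1 = j
      · rw [if_pos h, if_pos (by omega)]
      · rw [if_neg h, if_neg (by omega)]
    rw [Finset.sum_congr rfl he, Finset.sum_ite_eq' (Finset.range r) (j-1) g]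
    by_cases hjr : j - 1 ∈ Finset.range r
    · rw [if_pos hjr, if_pos]
      rw [Finset.mem_range] at hjr
      omega
    · rw [if_neg hjr, if_neg]
      rw [Finset.mem_range] at hjr
      omega

-- LamPS application
open Classical in
lemma lamPS_apply (f : MvPowerSeries ℕ ℤ) (m : ℕ →₀ ℕ) :
    LamPS f m =
      if (∀ i ∈ m.support, i ∈ Set.range (· + 1)) then
        f (Finsupp.comapDomain (· + 1) m (add_left_injective 1).injOn)
      else 0 := rfl

lemma comap_apply (m : ℕ →₀ ℕ) (j : ℕ) :
    (Finsupp.comapDomain (· + 1) m (add_left_injective 1).injOn) j = m (j+1) := rfl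

lemma lam_term (α : List ℕ) (k : ℕ) (hk : 1 ≤ k) (m : ℕ →₀ ℕ)
    (Hc : ∀ i, m i ≠ 0 ↔ (1 ≤ i ∧ i ≤ k)) :
    (MvPowerSeries.coeff m) (MvPowerSeries.X 1 * LamPS (genF coverN α (k-1))) =
      if m 1 = 1 then
        (numChains coverN α ((List.range (k-1)).map (fun i => m (i+2))) : ℤ)
      else 0 := by
  rw [coeff_X_mul', if_pos ((Hc 1).mpr ⟨le_refl 1, hk⟩)]
  set m' : ℕ →₀ ℕ := m - Finsupp.single 1 1 with hm'
  have hm'app : ∀ j, m' j = m j - (if 1 = j then 1 else 0) := fun j => sub_single_apply m 1 j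
  rw [lamPS_apply, if_pos ?_]
  · by_cases hm1 : m 1 = 1
    · rw [if_pos hm1]
      rw [genF_eq_of ?_]
      · congr 2
        apply List.map_congr_left
        intro i hi
        rw [comap_apply, hm'app, if_neg (by omega)]
        rfl
      · intro j
        rw [comap_apply, hm'app]
        rcases Nat.eq_zero_or_pos j with rfl | hj
        · rw [if_pos rfl]
          simp only [Nat.zero_add]
          constructor
          · intro h; omega
          · intro h; omega
        · rw [if_neg (by omega)]
          have := Hc (j+1)
          constructor
          · intro h
            have := this.mp (by omega)
            exact ⟨hj, by omega⟩
          · intro h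
            have := this.mpr ⟨by omega, by omega⟩
            omega
    · rw [if_neg hm1]
      apply genF_eq_zero
      intro C'
      have h0 : ¬ ((1:ℕ) ≤ 0 ∧ 0 ≤ k - 1) := by omega
      apply h0
      apply (C' 0).mp
      rw [comap_apply, hm'app, if_pos rfl]
      simp only [Nat.zero_add]
      have := (Hc 1).mpr ⟨le_refl 1, hk⟩
      omega
  · intro i hi
    rw [Finsupp.mem_support_iff, hm'app] at hi
    have : m i ≠ 0 := by omega
    have := (Hc i).mp this
    exact ⟨i - 1, by show i - 1 + 1 = i; omega⟩

lemma lam_term_bad (α : List ℕ) (k : ℕ) (hk : 1 ≤ k) (m : ℕ →₀ ℕ)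
    (HcN : ¬ (∀ i, m i ≠ 0 ↔ (1 ≤ i ∧ i ≤ k))) :
    (MvPowerSeries.coeff m) (MvPowerSeries.X 1 * LamPS (genF coverN α (k-1))) = 0 := by
  rw [coeff_X_mul']
  split_ifs with h
  · set m' : ℕ →₀ ℕ := m - Finsupp.single 1 1 with hm'
    have hm'app : ∀ j, m' j = m j - (if 1 = j then 1 else 0) := fun j => sub_single_apply m 1 j
    rw [lamPS_apply]
    split_ifs with hcond
    · apply genF_eq_zero
      intro C'
      apply HcN
      have hm0 : m 0 = 0 := by
        by_contra hm0
        have : (0:ℕ) ∈ m'.support := by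
          rw [Finsupp.mem_support_iff, hm'app, if_neg (by omega)]
          omega
        obtain ⟨t, ht⟩ := hcond 0 this
        exact absurd (show t + 1 = 0 from ht) (by omega)
      intro i
      match i, Nat.lt_or_ge i 2 with
      | 0, _ => simp [hm0]
      | 1, _ =>
          constructor
          · intro _; exact ⟨le_refl 1, hk⟩
          · intro _; exact h
      | (n+2), _ =>
          have := C' (n+1)
          rw [comap_apply, hm'app, if_neg (by omega)] at this
          have hsucc : n + 1 + 1 = n + 2 := rfl
          rw [hsucc] at this
          constructor
          · intro hne
            have := this.mp (by omega)
            exact ⟨by omega, by omega⟩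
          · intro hb
            have := this.mpr ⟨by omega, by omega⟩
            omega
    · rfl
  · rfl

lemma xk_term (α : List ℕ) (k : ℕ) (hk : 1 ≤ k) (m : ℕ →₀ ℕ)
    (Hc : ∀ i, m i ≠ 0 ↔ (1 ≤ i ∧ i ≤ k)) :
    (MvPowerSeries.coeff m) (MvPowerSeries.X k * genF coverN α (k-1)) =
      if m k = 1 then
        (numChains coverN α ((List.range (k-1)).map (fun i => m (i+1))) : ℤ)
      else 0 := by
  rw [coeff_X_mul', if_pos ((Hc k).mpr ⟨hk, le_refl k⟩)]
  have hm'app : ∀ j, (m - Finsupp.single k 1 : ℕ →₀ ℕ) j = m j - (if k = j then 1 else 0) :=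
    fun j => sub_single_apply m k j
  by_cases hmk : m k = 1
  · rw [if_pos hmk]
    rw [genF_eq_of ?_]
    · congr 2
      apply List.map_congr_left
      intro i hi
      rw [List.mem_range] at hi
      rw [hm'app, if_neg (by omega)]
      omega
    · intro i
      rw [hm'app]
      by_cases hik : k = i
      · subst hik
        rw [if_pos rfl]
        constructor
        · intro hne; omega
        · intro hb; omega
      · rw [if_neg hik]
        have := Hc i
        constructor
        · intro hne
          have := this.mp (by omega)
          exact ⟨by omega, by omega⟩
        · intro hb
          have := this.mpr ⟨by omega, by omega⟩
          omega
  · rw [if_neg hmk]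
    apply genF_eq_zero
    intro C'
    have := (C' k).mp ?_
    · omega
    · rw [hm'app, if_pos rfl]
      have := (Hc k).mpr ⟨hk, le_refl k⟩
      omega

lemma xk_term_bad (α : List ℕ) (k : ℕ) (hk : 1 ≤ k) (m : ℕ →₀ ℕ)
    (HcN : ¬ (∀ i, m i ≠ 0 ↔ (1 ≤ i ∧ i ≤ k))) :
    (MvPowerSeries.coeff m) (MvPowerSeries.X k * genF coverN α (k-1)) = 0 := by
  rw [coeff_X_mul']
  split_ifs with h
  · have hm'app : ∀ j, (m - Finsupp.single k 1 : ℕ →₀ ℕ) j = m j - (if k = j then 1 else 0) :=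
      fun j => sub_single_apply m k j
    apply genF_eq_zero
    intro C'
    apply HcN
    intro i
    by_cases hik : k = i
    · subst hik
      exact ⟨fun _ => ⟨hk, le_refl k⟩, fun _ => h⟩
    · have := C' i
      rw [hm'app, if_neg hik] at this
      constructor
      · intro hne
        have := this.mp (by omega)
        exact ⟨by omega, by omega⟩
      · intro hb
        have := this.mpr ⟨by omega, by omega⟩
        omega
  · rfl

-- evaluation of ∑ single over Icc
lemma icc_single_eval (k j : ℕ) :
    (∑ i ∈ Finset.Icc 1 k, Finsupp.single i (1:ℕ)) j = if 1 ≤ j ∧ j ≤ k then 1 else 0 := by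
  rw [finsupp_sum_single_apply (h := fun i => i) (g := fun _ => 1)]
  rw [show (∑ i ∈ Finset.Icc 1 k, if i = j then (1:ℕ) else 0) =
      if j ∈ Finset.Icc 1 k then 1 else 0 from
    Finset.sum_ite_eq' (Finset.Icc 1 k) j (fun _ => 1)]
  by_cases hj : 1 ≤ j ∧ j ≤ k
  · rw [if_pos (Finset.mem_Icc.mpr hj), if_pos hj]
  · rw [if_neg (fun hm => hj (Finset.mem_Icc.mp hm)), if_neg hj]

lemma eq_icc_single_iff (k : ℕ) (m : ℕ →₀ ℕ)
    (Hc : ∀ i, m i ≠ 0 ↔ (1 ≤ i ∧ i ≤ k)) :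
    m = (∑ i ∈ Finset.Icc 1 k, Finsupp.single i (1:ℕ)) ↔ ∀ i, i < k → m (i+1) = 1 := by
  constructor
  · intro h i hi
    have := congrArg (fun f : ℕ →₀ ℕ => f (i+1)) h
    rw [icc_single_eval] at this
    rw [this, if_pos ⟨by omega, by omega⟩]
  · intro h
    ext j
    rw [icc_single_eval]
    by_cases hj : 1 ≤ j ∧ j ≤ k
    · rw [if_pos hj]
      have := h (j-1) (by omega)
      have hj1 : j - 1 + 1 = j := by omega
      rwa [hj1] at this
    · rw [if_neg hj]
      by_contra hne
      exact hj ((Hc j).mp hne)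

lemma eq_icc_single_cond (k : ℕ) (m : ℕ →₀ ℕ)
    (h : m = (∑ i ∈ Finset.Icc 1 k, Finsupp.single i (1:ℕ))) :
    ∀ i, m i ≠ 0 ↔ (1 ≤ i ∧ i ≤ k) := by
  intro i
  rw [h, icc_single_eval]
  split_ifs with hi
  · simpa using hi
  · simpa using hi

-- v(α) monomial
lemma eq_v_iff (α : List ℕ) (r : ℕ) (hr : α.length = r) (m : ℕ →₀ ℕ)
    (Hc : ∀ i, m i ≠ 0 ↔ (1 ≤ i ∧ i ≤ r)) :
    ((List.range r).map (fun i => m (i+1)) = α) ↔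
      m = ∑ i ∈ Finset.range r, Finsupp.single (i+1) (α.getD i 0) := by
  constructor
  · intro h
    ext j
    rw [mono_eval]
    by_cases hj : 1 ≤ j ∧ j ≤ r
    · rw [if_pos hj]
      have := congrArg (fun l => l.getD (j-1) 0) h
      rw [q_getD r (j-1) (by omega)] at this
      have hj1 : j - 1 + 1 = j := by omega
      rwa [hj1] at this
    · rw [if_neg hj]
      by_contra hne
      exact hj ((Hc j).mp hne)
  · intro h
    apply List.ext_getElem (by simp [hr])
    intro i h1 h2
    simp only [List.getElem_map, List.getElem_range]
    have hir : i < r := by simpa using h1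
    have := congrArg (fun f : ℕ →₀ ℕ => f (i+1)) h
    rw [mono_eval, if_pos ⟨by omega, by omega⟩, Nat.add_sub_cancel] at this
    rw [this, List.getD_eq_getElem α 0 h2]

lemma eq_v_cond (α : List ℕ) (hα : IsComposition α) (r : ℕ) (hr : α.length = r) (m : ℕ →₀ ℕ)
    (h : m = ∑ i ∈ Finset.range r, Finsupp.single (i+1) (α.getD i 0)) :
    ∀ i, m i ≠ 0 ↔ (1 ≤ i ∧ i ≤ r) := by
  intro i
  rw [h, mono_eval]
  split_ifs with hi
  · constructor
    · intro _; exact hi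
    · intro _
      have hlt : i - 1 < α.length := by omega
      have := hα (α.getD (i-1) 0) (by rw [List.getD_eq_getElem α 0 hlt]; exact List.getElem_mem _)
      omega
  · simpa using hi

-- reindexing sum over Icc 1 k
lemma icc_sum (k : ℕ) (F : ℕ → ℤ) :
    ∑ i ∈ Finset.Icc 1 k, F i = ∑ j ∈ Finset.range k, F (j+1) := by
  induction k with
  | zero => simp
  | succ n ih =>
      rw [Finset.sum_range_succ, ← ih, Finset.sum_Icc_succ_top (by omega)]

open MvPowerSeries in
theorem stmt4 (α : List ℕ) (hα : IsComposition α) (r : ℕ) (hr : α.length = r) :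
    (∀ k, k < r → genF coverN α k = 0) ∧
    (genF coverN α r =
      vPS α + (∑ i ∈ Finset.Icc 1 r, (X i : MvPowerSeries ℕ ℤ)) * genF coverN α r) ∧
    (∀ k, r < k → ¬(∀ a ∈ α, a = 1) →
      genF coverN α k =
        X 1 * LamPS (genF coverN α (k - 1)) + X k * genF coverN α (k - 1) +
          (∑ i ∈ Finset.Icc 1 k, (X i : MvPowerSeries ℕ ℤ)) * genF coverN α k) ∧
    (∀ k, r < k → (∀ a ∈ α, a = 1) →
      genF coverN α k =
        X 1 * LamPS (genF coverN α (k - 1)) + X k * genF coverN α (k - 1) +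
          (∑ i ∈ Finset.Icc 1 k, (X i : MvPowerSeries ℕ ℤ)) * genF coverN α k -
          ∏ i ∈ Finset.Icc 1 k, (X i : MvPowerSeries ℕ ℤ)) := by
  classical
  -- common pieces
  have sumX_coeff : ∀ (k : ℕ) (m : ℕ →₀ ℕ),
      (MvPowerSeries.coeff m)
        ((∑ i ∈ Finset.Icc 1 k, (X i : MvPowerSeries ℕ ℤ)) * genF coverN α k) =
      ∑ i ∈ Finset.Icc 1 k,
        (if m i ≠ 0 then genF coverN α k (m - Finsupp.single i 1) else 0) := by
    intro k m
    rw [Finset.sum_mul, map_sum]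
    exact Finset.sum_congr rfl fun i _ => coeff_X_mul' i _ m
  -- the decrement sums agree, in the good case
  have sum_match : ∀ (k : ℕ) (m : ℕ →₀ ℕ) (Hc : ∀ i, m i ≠ 0 ↔ (1 ≤ i ∧ i ≤ k)),
      ∑ i ∈ Finset.Icc 1 k,
        (if m i ≠ 0 then genF coverN α k (m - Finsupp.single i 1) else 0) =
      ((∑ j ∈ Finset.range ((List.range k).map (fun i => m (i+1))).length,
        (if 1 ≤ ((List.range k).map (fun i => m (i+1))).getD j 0 then
          numChains coverN α (((List.range k).map (fun i => m (i+1))).set j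
            (((List.range k).map (fun i => m (i+1))).getD j 0 - 1)) else 0) : ℕ) : ℤ) := by
    intro k m Hc
    rw [icc_sum]
    push_cast
    rw [show ((List.range k).map (fun i => m (i+1))).length = k by simp]
    apply Finset.sum_congr rfl
    intro j hj
    rw [Finset.mem_range] at hj
    have hne : m (j+1) ≠ 0 := (Hc (j+1)).mpr ⟨by omega, by omega⟩
    rw [if_pos hne, if_pos (by rw [q_getD k j hj]; omega), sum_term hα k m Hc j hj]
  -- bad-case: decrement sum vanishes
  have sum_bad : ∀ (k : ℕ) (m : ℕ →₀ ℕ) (HcN : ¬ (∀ i, m i ≠ 0 ↔ (1 ≤ i ∧ i ≤ k))),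
      ∑ i ∈ Finset.Icc 1 k,
        (if m i ≠ 0 then genF coverN α k (m - Finsupp.single i 1) else 0) = 0 := by
    intro k m HcN
    apply Finset.sum_eq_zero
    intro i hi
    rw [Finset.mem_Icc] at hi
    split_ifs with h
    · exact sum_term_bad k m HcN i hi.1 hi.2 h
    · rfl
  refine ⟨?_, ?_, ?_, ?_⟩
  · -- part 1
    intro k hk
    apply MvPowerSeries.ext
    intro m
    rw [coeff_apply', map_zero]
    by_cases Hc : ∀ i, m i ≠ 0 ↔ (1 ≤ i ∧ i ≤ k)
    · rw [genF_eq_of Hc, lemA (by simp; omega), Nat.cast_zero]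
    · exact genF_eq_zero Hc coverN
  · -- part 2
    apply MvPowerSeries.ext
    intro m
    rw [map_add, sumX_coeff r m]
    have hv : (MvPowerSeries.coeff m) (vPS α) =
        if m = ∑ i ∈ Finset.range r, Finsupp.single (i+1) (α.getD i 0) then 1 else 0 := by
      rw [vPS, hr, prod_pow_X (Finset.range r) (fun i => i + 1) (fun i => α.getD i 0),
        MvPowerSeries.coeff_monomial]
    rw [hv, coeff_apply']
    by_cases Hc : ∀ i, m i ≠ 0 ↔ (1 ≤ i ∧ i ≤ r)
    · rw [genF_eq_of Hc, sum_match r m Hc, numChains_rec]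
      push_cast
      set Q := (List.range r).map (fun i => m (i+1)) with hQ
      have e0 : (if Q = α then (1:ℤ) else 0) =
          (if m = ∑ i ∈ Finset.range r, Finsupp.single (i+1) (α.getD i 0) then 1 else 0) := by
        rw [if_congr (eq_v_iff α r hr m Hc) rfl rfl]
      rcases Nat.eq_zero_or_pos r with rfl | hrpos
      · have hα0 : α = [] := List.length_eq_zero_iff.mp hr
        have hQnil : Q = [] := by simp [hQ]
        rw [← e0, hQnil, hα0]
        simp
      · have eh : (if Q.head? = some 1 then (numChains coverN α Q.tail : ℤ) else 0) = 0 := by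
          split_ifs with h
          · rw [lemA (by simp [hQ]; omega), Nat.cast_zero]
          · rfl
        have el : (if Q.getLast? = some 1 ∧ Q ≠ 1 :: Q.dropLast then
            (numChains coverN α Q.dropLast : ℤ) else 0) = 0 := by
          split_ifs with h
          · rw [lemA (by simp [hQ]; omega), Nat.cast_zero]
          · rfl
        rw [eh, el, ← e0]
        push_cast
        ring
    · rw [genF_eq_zero Hc, sum_bad r m Hc]
      rw [if_neg (fun h => Hc (eq_v_cond α hα r hr m h))]
      ring
  · -- part 3
    intro k hk hno
    have hk1 : 1 ≤ k := by omega
    have hbig : ∃ x ∈ α, 2 ≤ x := by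
      push_neg at hno
      obtain ⟨a, ha, hane⟩ := hno
      exact ⟨a, ha, by have := hα a ha; omega⟩
    apply MvPowerSeries.ext
    intro m
    rw [map_add, map_add, sumX_coeff k m, coeff_apply']
    by_cases Hc : ∀ i, m i ≠ 0 ↔ (1 ≤ i ∧ i ≤ k)
    · rw [genF_eq_of Hc, sum_match k m Hc, numChains_rec, lam_term α k hk1 m Hc,
        xk_term α k hk1 m Hc]
      push_cast
      set Q := (List.range k).map (fun i => m (i+1)) with hQ
      have e0 : (if Q = α then (1:ℤ) else 0) = 0 := by
        split_ifs with h
        · exfalso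
          have := congrArg List.length h
          simp [hQ, hr] at this
          omega
        · rfl
      have hglQ : Q.getLast? = some (m k) := by
        rw [hQ, q_getLast k hk1]
        exact congrArg some (congrArg m (by omega))
      have hdlQ : Q.dropLast = (List.range (k-1)).map (fun i => m (i+1)) := by
        rw [hQ]; exact q_dropLast k hk1 _
      have hcons : (Q = 1 :: Q.dropLast) ↔ ∀ i < k, m (i+1) = 1 := by
        rw [hQ]; exact q_eq_cons_iff k hk1 _
      have eh : (if Q.head? = some 1 then (numChains coverN α Q.tail : ℤ) else 0) =
          (if m 1 = 1 then
            (numChains coverN α ((List.range (k-1)).map (fun i => m (i+2))) : ℤ) else 0) := by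
        have hh : Q.head? = some (m 1) := by
          rw [hQ, q_head k hk1]
        have ht : Q.tail = (List.range (k-1)).map (fun i => m (i+2)) := by
          rw [hQ, q_tail k hk1]
        rw [hh, ht]
        by_cases h1 : m 1 = 1
        · rw [if_pos (by rw [h1]), if_pos h1]
        · rw [if_neg (fun hc => h1 (Option.some_inj.mp hc)), if_neg h1]
      have el : (if Q.getLast? = some 1 ∧ Q ≠ 1 :: Q.dropLast then
          (numChains coverN α Q.dropLast : ℤ) else 0) =
          (if m k = 1 then
            (numChains coverN α ((List.range (k-1)).map (fun i => m (i+1))) : ℤ) else 0) := by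
        by_cases hallQ : ∀ i < k, m (i+1) = 1
        · have hmk1 : m k = 1 := by
            have := hallQ (k-1) (by omega)
            have hk' : k - 1 + 1 = k := by omega
            rwa [hk'] at this
          rw [if_neg (fun hc => hc.2 (hcons.mpr hallQ)), if_pos hmk1]
          rw [lemC hα hbig ?_, Nat.cast_zero]
          intro x hx
          rw [List.mem_map] at hx
          obtain ⟨i, hi, rfl⟩ := hx
          rw [List.mem_range] at hi
          exact hallQ i (by omega)
        · by_cases hmk1 : m k = 1
          · rw [if_pos ⟨by rw [hglQ, hmk1], fun hc => hallQ (hcons.mp hc)⟩, if_pos hmk1, hdlQ]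
          · rw [if_neg ?_, if_neg hmk1]
            rintro ⟨h1, -⟩
            rw [hglQ] at h1
            exact hmk1 (Option.some_inj.mp h1)
      rw [e0, eh, el]
      ring
    · rw [genF_eq_zero Hc, lam_term_bad α k hk1 m Hc, xk_term_bad α k hk1 m Hc,
        sum_bad k m Hc]
      ring
  · -- part 4
    intro k hk hone
    have hk1 : 1 ≤ k := by omega
    have hrep : α = List.replicate r 1 := List.eq_replicate_iff.mpr ⟨hr, hone⟩
    apply MvPowerSeries.ext
    intro m
    rw [map_sub, map_add, map_add, sumX_coeff k m, coeff_apply']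
    have hprod : (MvPowerSeries.coeff m) (∏ i ∈ Finset.Icc 1 k, (X i : MvPowerSeries ℕ ℤ)) =
        if m = ∑ i ∈ Finset.Icc 1 k, Finsupp.single i (1:ℕ) then 1 else 0 := by
      have hp : (∏ i ∈ Finset.Icc 1 k, (X i : MvPowerSeries ℕ ℤ)) =
          ∏ i ∈ Finset.Icc 1 k, (X i : MvPowerSeries ℕ ℤ) ^ (1:ℕ) := by
        simp
      rw [hp, prod_pow_X (Finset.Icc 1 k) (fun i => i) (fun _ => 1),
        MvPowerSeries.coeff_monomial]
    rw [hprod]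
    by_cases Hc : ∀ i, m i ≠ 0 ↔ (1 ≤ i ∧ i ≤ k)
    · rw [genF_eq_of Hc, sum_match k m Hc, numChains_rec, lam_term α k hk1 m Hc,
        xk_term α k hk1 m Hc]
      push_cast
      set Q := (List.range k).map (fun i => m (i+1)) with hQ
      have e0 : (if Q = α then (1:ℤ) else 0) = 0 := by
        split_ifs with h
        · exfalso
          have := congrArg List.length h
          simp [hQ, hr] at this
          omega
        · rfl
      have hglQ : Q.getLast? = some (m k) := by
        rw [hQ, q_getLast k hk1]
        exact congrArg some (congrArg m (by omega))
      have hdlQ : Q.dropLast = (List.range (k-1)).map (fun i => m (i+1)) := by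
        rw [hQ]; exact q_dropLast k hk1 _
      have hcons : (Q = 1 :: Q.dropLast) ↔ ∀ i < k, m (i+1) = 1 := by
        rw [hQ]; exact q_eq_cons_iff k hk1 _
      have eh : (if Q.head? = some 1 then (numChains coverN α Q.tail : ℤ) else 0) =
          (if m 1 = 1 then
            (numChains coverN α ((List.range (k-1)).map (fun i => m (i+2))) : ℤ) else 0) := by
        have hh : Q.head? = some (m 1) := by
          rw [hQ, q_head k hk1]
        have ht : Q.tail = (List.range (k-1)).map (fun i => m (i+2)) := by
          rw [hQ, q_tail k hk1]
        rw [hh, ht]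
        by_cases h1 : m 1 = 1
        · rw [if_pos (by rw [h1]), if_pos h1]
        · rw [if_neg (fun hc => h1 (Option.some_inj.mp hc)), if_neg h1]
      have hmiff : (m = ∑ i ∈ Finset.Icc 1 k, Finsupp.single i (1:ℕ)) ↔ ∀ i < k, m (i+1) = 1 :=
        eq_icc_single_iff k m Hc
      have el : (if Q.getLast? = some 1 ∧ Q ≠ 1 :: Q.dropLast then
          (numChains coverN α Q.dropLast : ℤ) else 0) =
          (if m k = 1 then
            (numChains coverN α ((List.range (k-1)).map (fun i => m (i+1))) : ℤ) else 0)
          - (if m = ∑ i ∈ Finset.Icc 1 k, Finsupp.single i (1:ℕ) then 1 else 0) := by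
        by_cases hallQ : ∀ i < k, m (i+1) = 1
        · have hmk1 : m k = 1 := by
            have := hallQ (k-1) (by omega)
            have hk' : k - 1 + 1 = k := by omega
            rwa [hk'] at this
          rw [if_neg (fun hc => hc.2 (hcons.mpr hallQ)), if_pos hmk1, if_pos (hmiff.mpr hallQ)]
          have hdrep : (List.range (k-1)).map (fun i => m (i+1)) = List.replicate (k-1) 1 := by
            apply List.eq_replicate_iff.mpr
            refine ⟨by simp, ?_⟩
            intro x hx
            rw [List.mem_map] at hx
            obtain ⟨i, hi, rfl⟩ := hx
            rw [List.mem_range] at hi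
            exact hallQ i (by omega)
          rw [hdrep, hrep, lemD r (k-1) (by omega)]
          norm_num
        · rw [if_neg (fun hc => hallQ (hmiff.mp hc)), sub_zero]
          by_cases hmk1 : m k = 1
          · rw [if_pos ⟨by rw [hglQ, hmk1], fun hc => hallQ (hcons.mp hc)⟩, if_pos hmk1, hdlQ]
          · rw [if_neg ?_, if_neg hmk1]
            rintro ⟨h1, -⟩
            rw [hglQ] at h1
            exact hmk1 (Option.some_inj.mp h1)
      rw [e0, eh, el]
      ring
    · rw [genF_eq_zero Hc, lam_term_bad α k hk1 m Hc, xk_term_bad α k hk1 m Hc,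
        sum_bad k m Hc]
      rw [if_neg (fun h => Hc (eq_icc_single_cond k m h))]
      ring
end

section
/- Let α be a composition of N with r ≥ 1 parts which is not all-ones. Then for every k ≥ r, L_k^α[𝔑](t) · ∏_{i=r}^{k} (1 − it) = 2^{k−r}·t^{N+k−r} in ℤ[[t]]. -/
/-- `ank cover α n k` is the number of saturated chains (with respect to `cover`)
starting at `α` and ending at a composition of `n` with `k` parts. -/
noncomputable def ank (cover : List ℕ → List ℕ → Prop) (α : List ℕ) (n k : ℕ) : ℕ :=
  Nat.card {c : List (List ℕ) //
    c.Chain' cover ∧ c.head? = some α ∧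
      ∃ Q, c.getLast? = some Q ∧ Q.sum = n ∧ Q.length = k}

/-- The generating function `L_k^α(t) = Σ_n a_{n,k}^α t^n`. -/
noncomputable def Lser (cover : List ℕ → List ℕ → Prop) (α : List ℕ) (k : ℕ) :
    PowerSeries ℤ :=
  PowerSeries.mk fun n => (ank cover α n k : ℤ)


namespace Stmt10Aux

open Relation

variable {β : Type*} {R : β → β → Prop}

def Good (P : List ℕ) : Prop := (∀ x ∈ P, 0 < x) ∧ ∃ a ∈ P, 2 ≤ a

lemma sum_set_succ (l : List ℕ) (j : ℕ) (hj : j < l.length) :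
    (l.set j (l.getD j 0 + 1)).sum = l.sum + 1 := by
  have h1 : l.sum = (l.take j).sum + (l.drop j).sum := by
    conv_lhs => rw [← List.take_append_drop j l]
    rw [List.sum_append]
  have h2 : (l.drop j).sum = l[j] + (l.drop (j+1)).sum := by
    rw [← List.getElem_cons_drop hj, List.sum_cons]
  rw [List.set_eq_take_cons_drop _ hj, List.getD_eq_getElem l 0 hj, List.sum_append,
    List.sum_cons]
  omega

lemma cover_sum {P Q : List ℕ} (h : coverN P Q) : Q.sum = P.sum + 1 := by
  rcases h with h | h | ⟨j, hj, h⟩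
  · subst h; simp [Nat.add_comm]
  · subst h; simp
  · subst h; exact sum_set_succ _ _ hj

lemma cover_length {P Q : List ℕ} (h : coverN P Q) :
    Q.length = P.length ∨ Q.length = P.length + 1 := by
  rcases h with h | h | ⟨j, hj, h⟩ <;> subst h <;> simp

lemma cover_comp {P Q : List ℕ} (h : coverN P Q) (hP : IsComposition P) : IsComposition Q := by
  rcases h with h | h | ⟨j, hj, h⟩ <;> subst h
  · intro x hx
    rcases List.mem_cons.mp hx with h | h
    · omega
    · exact hP x h
  · intro x hx
    rcases List.mem_append.mp hx with h | h
    · exact hP x h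
    · simp at h; omega
  · intro x hx
    rcases List.mem_or_eq_of_mem_set hx with h | h
    · exact hP x h
    · omega

lemma cover_good {P Q : List ℕ} (h : coverN P Q) (hP : Good P) : Good Q := by
  obtain ⟨hpos, a, ha, ha2⟩ := hP
  refine ⟨cover_comp h hpos, ?_⟩
  rcases h with h | h | ⟨j, hj, h⟩ <;> subst h
  · exact ⟨a, List.mem_cons_of_mem _ ha, ha2⟩
  · exact ⟨a, by simp [ha], ha2⟩
  · refine ⟨(P.set j (P.getD j 0 + 1))[j]'(by simpa), List.getElem_mem (by simpa), ?_⟩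
    have h0 : (P.set j (P.getD j 0 + 1))[j]'(by simpa) = P.getD j 0 + 1 :=
      List.getElem_set_self _
    have h1 : 0 < P.getD j 0 := by
      rw [List.getD_eq_getElem P 0 hj]; exact hpos _ (List.getElem_mem hj)
    omega


lemma chain_rtg : ∀ {c : List β} {a b : β}, c.Chain' R → c.head? = some a →
    c.getLast? = some b → Relation.ReflTransGen R a b := by
  intro c
  induction c with
  | nil => intro a b _ h; simp at h
  | cons x t ih =>
    intro a b hc hh hl
    simp at hh; subst hh
    match t with
    | [] => simp at hl; subst hl; exact ReflTransGen.refl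
    | y :: t' =>
      have h1 : R x y := (List.isChain_cons_cons.mp hc).1
      have h2 := (List.isChain_cons_cons.mp hc).2
      have h3 : (y :: t').getLast? = some b := by
        rw [← hl]; exact (List.getLast?_cons_cons ..).symm
      exact ReflTransGen.head h1 (ih h2 rfl h3)

lemma chain_mem_rtg : ∀ {c : List β} {a : β}, c.Chain' R → c.head? = some a →
    ∀ b ∈ c, Relation.ReflTransGen R a b := by
  intro c
  induction c with
  | nil => intro a _ _ b hb; simp at hb
  | cons x t ih =>
    intro a hc hh b hb
    simp at hh; subst hh
    rcases List.mem_cons.mp hb with h | h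
    · subst h; exact ReflTransGen.refl
    match t with
    | [] => simp at h
    | y :: t' =>
      have h1 : R x y := (List.isChain_cons_cons.mp hc).1
      exact ReflTransGen.head (List.isChain_cons_cons.mp hc).1 (ih (List.isChain_cons_cons.mp hc).2 rfl b h)

lemma chain_mem_rtg' : ∀ {c : List β} {b : β}, c.Chain' R → c.getLast? = some b →
    ∀ q ∈ c, Relation.ReflTransGen R q b := by
  intro c
  induction c with
  | nil => intro b _ _ q hq; simp at hq
  | cons x t ih =>
    intro b hc hl q hq
    match t with
    | [] =>
      simp at hl hq; subst hl; subst hq; exact ReflTransGen.refl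
    | y :: t' =>
      have hl' : (y :: t').getLast? = some b := by
        rw [← hl]; exact (List.getLast?_cons_cons ..).symm
      rcases List.mem_cons.mp hq with h | h
      · subst h
        exact ReflTransGen.head (List.isChain_cons_cons.mp hc).1
          (ih (List.isChain_cons_cons.mp hc).2 hl' y (List.mem_cons_self ..))
      · exact ih (List.isChain_cons_cons.mp hc).2 hl' q h

lemma chain_sum : ∀ {c : List (List ℕ)} {a b : List ℕ}, c.Chain' coverN →
    c.head? = some a → c.getLast? = some b → b.sum + 1 = a.sum + c.length := by
  intro c
  induction c with
  | nil => intro a b _ h; simp at h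
  | cons x t ih =>
    intro a b hc hh hl
    simp at hh; subst hh
    match t with
    | [] => simp at hl; subst hl; simp
    | y :: t' =>
      have h1 : coverN x y := (List.isChain_cons_cons.mp hc).1
      have h3 : (y :: t').getLast? = some b := by
        rw [← hl]; exact (List.getLast?_cons_cons ..).symm
      have h4 := ih (List.isChain_cons_cons.mp hc).2 rfl h3
      have h5 := cover_sum h1
      simp only [List.length_cons] at h4 ⊢
      omega

lemma rtg_sum_le {a b : List ℕ} (h : Relation.ReflTransGen coverN a b) : a.sum ≤ b.sum := by
  induction h with
  | refl => exact le_refl _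
  | tail hab hbc ih => have := cover_sum hbc; omega

lemma rtg_len_le {a b : List ℕ} (h : Relation.ReflTransGen coverN a b) :
    a.length ≤ b.length := by
  induction h with
  | refl => exact le_refl _
  | tail hab hbc ih => rcases cover_length hbc with h | h <;> omega

lemma rtg_comp {a b : List ℕ} (h : Relation.ReflTransGen coverN a b)
    (ha : IsComposition a) : IsComposition b := by
  induction h with
  | refl => exact ha
  | tail hab hbc ih => exact cover_comp hbc ih


lemma len_le_sum : ∀ {Q : List ℕ}, (∀ x ∈ Q, 0 < x) → Q.length ≤ Q.sum := by
  intro Q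
  induction Q with
  | nil => simp
  | cons a t ih =>
    intro h
    have h1 := h a (List.mem_cons_self ..)
    have h2 := ih (fun x hx => h x (List.mem_cons_of_mem _ hx))
    simp only [List.length_cons, List.sum_cons]
    omega

lemma mem_le_sum : ∀ {Q : List ℕ} {a : ℕ}, a ∈ Q → a ≤ Q.sum := by
  intro Q
  induction Q with
  | nil => simp
  | cons b t ih =>
    intro a ha
    rcases List.mem_cons.mp ha with h | h
    · simp [h]
    · have := ih h; simp only [List.sum_cons]; omega

lemma finite_bdd (n : ℕ) : {Q : List ℕ | Q.length ≤ n ∧ ∀ x ∈ Q, x ≤ n}.Finite := by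
  apply Set.Finite.subset ((List.finite_length_le (Fin (n+1)) n).image (List.map (Fin.val)))
  rintro Q ⟨h1, h2⟩
  refine ⟨Q.attach.map (fun x => (⟨x.1, Nat.lt_succ_of_le (h2 x.1 x.2)⟩ : Fin (n+1))),
    by simpa using h1, ?_⟩
  rw [List.map_map]
  simp

lemma finite_chains (α : List ℕ) (hα : IsComposition α) (n k : ℕ) :
    Finite {c : List (List ℕ) // c.Chain' coverN ∧ c.head? = some α ∧
      ∃ Q, c.getLast? = some Q ∧ Q.sum = n ∧ Q.length = k} := by
  have hT : {Q : List ℕ | Q.length ≤ n ∧ ∀ x ∈ Q, x ≤ n}.Finite := finite_bdd n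
  haveI := hT.to_subtype
  have h3 := (List.finite_length_le ↥{Q : List ℕ | Q.length ≤ n ∧ ∀ x ∈ Q, x ≤ n} (n+1)).image
    (List.map Subtype.val)
  have hsub : {c : List (List ℕ) | c.Chain' coverN ∧ c.head? = some α ∧
      ∃ Q, c.getLast? = some Q ∧ Q.sum = n ∧ Q.length = k} ⊆
      (List.map Subtype.val) '' {l : List ↥{Q : List ℕ | Q.length ≤ n ∧ ∀ x ∈ Q, x ≤ n} |
        l.length ≤ n+1} := by
    rintro c ⟨hc, hh, Q, hl, hs, hk⟩
    have hmem : ∀ P ∈ c, P ∈ {Q : List ℕ | Q.length ≤ n ∧ ∀ x ∈ Q, x ≤ n} := by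
      intro P hP
      have r1 := chain_mem_rtg hc hh P hP
      have r2 := chain_mem_rtg' hc hl P hP
      have hcomp : IsComposition P := rtg_comp r1 hα
      have hsle : P.sum ≤ n := hs ▸ rtg_sum_le r2
      have hlen : P.length ≤ P.sum := len_le_sum hcomp
      exact ⟨le_trans hlen hsle, fun x hx => le_trans (mem_le_sum hx) hsle⟩
    refine ⟨c.attach.map (fun P => ⟨P.1, hmem P.1 P.2⟩), ?_, ?_⟩
    · have h8 := chain_sum hc hh hl
      have h9 : Q.sum = n := hs
      rw [Set.mem_setOf_eq, List.length_map, List.length_attach]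
      omega
    · rw [List.map_map]; simp
  exact (Set.Finite.subset h3 hsub).to_subtype

lemma rtg_good {a b : List ℕ} (h : Relation.ReflTransGen coverN a b) (ha : Good a) : Good b := by
  induction h with
  | refl => exact ha
  | tail hab hbc ih => exact cover_good hbc ih

lemma ones : ∀ {P : List ℕ}, 1 :: P = P ++ [1] → ∀ x ∈ P, x = 1 := by
  intro P
  induction P with
  | nil => simp
  | cons a t ih =>
    intro h x hx
    simp only [List.cons_append, List.cons.injEq] at h
    obtain ⟨h1, h2⟩ := h
    subst h1
    rcases List.mem_cons.mp hx with h | h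
    · omega
    · exact ih h2 x h

def lastOf (c : List (List ℕ)) : List ℕ := c.getLast?.getD []

lemma lastOf_eq {c : List (List ℕ)} {P : List ℕ} (h : c.getLast? = some P) : lastOf c = P := by
  simp [lastOf, h]

def ChProp (α : List ℕ) (n k : ℕ) (c : List (List ℕ)) : Prop :=
  c.Chain' coverN ∧ c.head? = some α ∧ ∃ Q, c.getLast? = some Q ∧ Q.sum = n ∧ Q.length = k

lemma ank_eq (α : List ℕ) (n k : ℕ) : ank coverN α n k = Nat.card {c // ChProp α n k c} := rfl

lemma head?_append_ne {β : Type*} {l₁ : List β} (l₂ : List β) {a : β} (h : l₁.head? = some a) :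
    (l₁ ++ l₂).head? = some a := by
  cases l₁ with
  | nil => simp at h
  | cons x t => simpa using h

def fwd (α : List ℕ) (n k : ℕ) :
    ({c // ChProp α n k c} × Fin k) ⊕ ({c // ChProp α n (k-1) c} × Fin 2) → List (List ℕ)
  | .inl (c, j) => c.1 ++ [(lastOf c.1).set j ((lastOf c.1).getD j 0 + 1)]
  | .inr (c, i) => c.1 ++ [if (i : ℕ) = 0 then 1 :: lastOf c.1 else lastOf c.1 ++ [1]]

lemma chprop_append {α : List ℕ} {n k : ℕ} {c : List (List ℕ)} {P Q : List ℕ}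
    (h : ChProp α n k c) (hP : c.getLast? = some P) (hcov : coverN P Q) :
    ChProp α (n + 1) Q.length (c ++ [Q]) := by
  obtain ⟨hc, hh, R, hR, hRs, hRl⟩ := h
  have hPR : R = P := by rw [hR] at hP; exact Option.some.inj hP
  subst hPR
  refine ⟨?_, head?_append_ne _ hh, Q, List.getLast?_concat (l := c), ?_, rfl⟩
  · refine List.isChain_append.mpr ⟨hc, List.isChain_singleton Q, ?_⟩
    intro x hx y hy
    rw [hP] at hx
    simp only [Option.mem_def, Option.some.injEq] at hx
    simp only [List.head?_cons, Option.mem_def, Option.some.injEq] at hy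
    subst hx; subst hy
    exact hcov
  · rw [cover_sum hcov, hRs]

lemma fwd_prop (α : List ℕ) (n k : ℕ) (hk : 1 ≤ k)
    (x : ({c // ChProp α n k c} × Fin k) ⊕ ({c // ChProp α n (k-1) c} × Fin 2)) :
    ChProp α (n + 1) k (fwd α n k x) := by
  rcases x with ⟨⟨c, hc⟩, j⟩ | ⟨⟨c, hc⟩, i⟩
  · obtain ⟨_, _, P, hP, hPs, hPl⟩ := id hc
    have hL := lastOf_eq hP
    have hj : (j : ℕ) < P.length := by rw [hPl]; exact j.isLt
    have h := chprop_append hc hP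
      (Or.inr (Or.inr ⟨j, hj, rfl⟩) : coverN P (P.set j (P.getD (j:ℕ) 0 + 1)))
    simp only [fwd, hL]
    simpa [List.length_set, hPl] using h
  · obtain ⟨_, _, P, hP, hPs, hPl⟩ := id hc
    have hL := lastOf_eq hP
    rcases (by omega : (i : ℕ) = 0 ∨ (i : ℕ) = 1) with h0 | h1
    · have h := chprop_append hc hP (Or.inl rfl : coverN P (1 :: P))
      simp only [fwd, hL, h0, if_pos]
      have : (1 :: P).length = k := by simp [hPl]; omega
      rwa [this] at h
    · have h := chprop_append hc hP (Or.inr (Or.inl rfl) : coverN P (P ++ [1]))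
      simp only [fwd, hL, h1]
      norm_num
      have : (P ++ [1]).length = k := by simp [hPl]; omega
      rwa [this] at h


lemma lastLen {α : List ℕ} {m j : ℕ} {c : List (List ℕ)} (hc : ChProp α m j c) :
    (lastOf c).length = j ∧ (lastOf c).sum = m := by
  obtain ⟨_, _, P, hP, hs, hl⟩ := hc
  rw [lastOf_eq hP]
  exact ⟨hl, hs⟩

lemma lastGood {α : List ℕ} (hg : Good α) {m j : ℕ} {c : List (List ℕ)} (hc : ChProp α m j c) :
    Good (lastOf c) := by
  obtain ⟨h1, h2, P, hP, hs, hl⟩ := hc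
  rw [lastOf_eq hP]
  exact rtg_good (chain_rtg h1 h2 hP) hg

lemma concat_eq {β : Type*} {u v : List β} {a b : β} (h : u ++ [a] = v ++ [b]) :
    u = v ∧ a = b := by
  have h1 := congrArg List.dropLast h
  simp only [List.dropLast_concat] at h1
  have h2 := congrArg List.getLast? h
  simp only [List.getLast?_concat] at h2
  exact ⟨h1, Option.some.inj h2⟩

lemma fwd_inj (α : List ℕ) (hg : Good α) (n k : ℕ) (hk : 1 ≤ k) :
    Function.Injective (fwd α n k) := by
  rintro (⟨⟨c₁, hc₁⟩, j₁⟩ | ⟨⟨c₁, hc₁⟩, i₁⟩) (⟨⟨c₂, hc₂⟩, j₂⟩ | ⟨⟨c₂, hc₂⟩, i₂⟩) hxy <;>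
    simp only [fwd] at hxy <;> obtain ⟨hcc, hqq⟩ := concat_eq hxy
  · -- inl inl
    obtain rfl : c₁ = c₂ := hcc
    have hlen : (lastOf c₁).length = k := (lastLen hc₁).1
    have hjj : (j₁ : ℕ) = (j₂ : ℕ) := by
      by_contra hne
      have hlt1 : (j₁ : ℕ) < (lastOf c₁).length := by rw [hlen]; exact j₁.isLt
      have h1 := congrArg (fun l => l[(j₁ : ℕ)]?) hqq
      rw [List.getElem?_set_self (by simpa using hlt1), List.getElem?_set_ne (by omega)] at h1
      rw [List.getElem?_eq_getElem hlt1, List.getD_eq_getElem _ 0 hlt1] at h1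
      simp at h1
    simp only [Sum.inl.injEq, Prod.mk.injEq]
    exact ⟨trivial, Fin.ext hjj⟩
  · -- inl inr : impossible
    exfalso
    obtain rfl : c₁ = c₂ := hcc
    have h1 : (lastOf c₁).length = k := (lastLen hc₁).1
    have h2 : (lastOf c₁).length = k - 1 := (lastLen hc₂).1
    omega
  · -- inr inl : impossible
    exfalso
    obtain rfl : c₁ = c₂ := hcc
    have h1 : (lastOf c₁).length = k - 1 := (lastLen hc₁).1
    have h2 : (lastOf c₁).length = k := (lastLen hc₂).1
    omega
  · -- inr inr
    obtain rfl : c₁ = c₂ := hcc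
    have hgood : Good (lastOf c₁) := lastGood hg hc₁
    have hii : (i₁ : ℕ) = (i₂ : ℕ) := by
      rcases (by omega : (i₁ : ℕ) = 0 ∨ (i₁ : ℕ) = 1) with h1 | h1 <;>
        rcases (by omega : (i₂ : ℕ) = 0 ∨ (i₂ : ℕ) = 1) with h2 | h2 <;>
          simp only [h1, h2, if_pos, if_neg, one_ne_zero, reduceIte] at hqq ⊢
      · exfalso
        obtain ⟨_, a, ha, ha2⟩ := hgood
        have := ones hqq a ha
        omega
      · exfalso
        obtain ⟨_, a, ha, ha2⟩ := hgood
        have := ones hqq.symm a ha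
        omega
    simp only [Sum.inr.injEq, Prod.mk.injEq]
    exact ⟨trivial, Fin.ext hii⟩

lemma fwd_surj (α : List ℕ) (n k : ℕ) (hn : α.sum ≤ n) (hk : 1 ≤ k)
    (d : List (List ℕ)) (hd : ChProp α (n+1) k d) :
    ∃ x, fwd α n k x = d := by
  obtain ⟨hc, hh, Q, hl, hs, hk'⟩ := hd
  have hdc : d.dropLast ++ [Q] = d := List.dropLast_append_getLast? Q hl
  have hlen2 : 2 ≤ d.length := by
    have := chain_sum hc hh hl
    omega
  have hcne : d.dropLast ≠ [] := by
    intro h0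
    have := congrArg List.length hdc
    rw [h0] at this
    simp at this
    omega
  obtain ⟨P, hP⟩ : ∃ P, d.dropLast.getLast? = some P := by
    have := List.getLast?_isSome.mpr hcne
    exact Option.isSome_iff_exists.mp this
  have hchain : (d.dropLast ++ [Q]).Chain' coverN := by rw [hdc]; exact hc
  have hcc : d.dropLast.Chain' coverN := (List.isChain_append.mp hchain).1
  have hcov : coverN P Q := by
    refine (List.isChain_append.mp hchain).2.2 P ?_ Q rfl
    exact hP
  have hh' : d.dropLast.head? = some α := by
    have := head?_append_ne (l₁ := d.dropLast) [Q] (a := α)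
    rcases hcx : d.dropLast with _ | ⟨a, t⟩
    · exact absurd hcx hcne
    · rw [hcx] at hdc
      rw [← hdc] at hh
      simpa using hh
  have hPs : P.sum = n := by
    have := cover_sum hcov
    omega
  have hlast := lastOf_eq hP
  rcases hcov with hq | hq | ⟨j, hj, hq⟩
  · -- Q = 1 :: P
    have hPl : P.length = k - 1 := by
      have : Q.length = P.length + 1 := by rw [hq]; simp
      omega
    refine ⟨Sum.inr (⟨d.dropLast, hcc, hh', P, hP, hPs, hPl⟩, (0 : Fin 2)), ?_⟩
    simp only [fwd, hlast]
    norm_num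
    rw [← hq, hdc]
  · -- Q = P ++ [1]
    have hPl : P.length = k - 1 := by
      have : Q.length = P.length + 1 := by rw [hq]; simp
      omega
    refine ⟨Sum.inr (⟨d.dropLast, hcc, hh', P, hP, hPs, hPl⟩, (1 : Fin 2)), ?_⟩
    simp only [fwd, hlast]
    norm_num
    rw [← hq, hdc]
  · -- set case
    have hPl : P.length = k := by
      have : Q.length = P.length := by rw [hq]; simp
      omega
    refine ⟨Sum.inl (⟨d.dropLast, hcc, hh', P, hP, hPs, hPl⟩, ⟨j, by omega⟩), ?_⟩
    simp only [fwd, hlast]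
    rw [← hq, hdc]

lemma ank_rec (α : List ℕ) (hg : Good α) (n k : ℕ) (hn : α.sum ≤ n) (hk : 1 ≤ k) :
    ank coverN α (n+1) k = k * ank coverN α n k + 2 * ank coverN α n (k-1) := by
  haveI h1 : Finite {c // ChProp α n k c} := finite_chains α hg.1 n k
  haveI h2 : Finite {c // ChProp α n (k-1) c} := finite_chains α hg.1 n (k-1)
  have hbij : Function.Bijective (fun x => (⟨fwd α n k x, fwd_prop α n k hk x⟩ :
      {c // ChProp α (n+1) k c})) := by
    constructor
    · intro x y hxy
      exact fwd_inj α hg n k hk (congrArg Subtype.val hxy)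
    · rintro ⟨d, hd⟩
      obtain ⟨x, hx⟩ := fwd_surj α n k hn hk d hd
      exact ⟨x, Subtype.ext hx⟩
  have hcard := Nat.card_eq_of_bijective _ hbij
  rw [Nat.card_sum, Nat.card_prod, Nat.card_prod] at hcard
  rw [ank_eq α (n+1) k, ← hcard, ank_eq α n k, ank_eq α n (k-1)]
  simp [Nat.card_eq_fintype_card]
  ring


lemma ank_lt_sum (α : List ℕ) (n k : ℕ) (h : n < α.sum) : ank coverN α n k = 0 := by
  rw [ank_eq]
  haveI : IsEmpty {c // ChProp α n k c} := by
    constructor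
    rintro ⟨c, hc, hh, Q, hl, hs, hkk⟩
    have := rtg_sum_le (chain_rtg hc hh hl)
    omega
  exact Nat.card_of_isEmpty

lemma ank_lt_len (α : List ℕ) (n k : ℕ) (h : k < α.length) : ank coverN α n k = 0 := by
  rw [ank_eq]
  haveI : IsEmpty {c // ChProp α n k c} := by
    constructor
    rintro ⟨c, hc, hh, Q, hl, hs, hkk⟩
    have := rtg_len_le (chain_rtg hc hh hl)
    omega
  exact Nat.card_of_isEmpty

lemma chprop_sum_self {α : List ℕ} {k : ℕ} {c : List (List ℕ)} (h : ChProp α α.sum k c) :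
    c = [α] ∧ k = α.length := by
  obtain ⟨hc, hh, Q, hl, hs, hkk⟩ := h
  have e1 : c.length = 1 := by have := chain_sum hc hh hl; omega
  obtain ⟨a, rfl⟩ := List.length_eq_one_iff.mp e1
  have ha : a = α := by simpa using hh
  subst ha
  have hQ : Q = a := by simpa using hl.symm
  subst hQ
  exact ⟨rfl, hkk.symm⟩

lemma ank_diag (α : List ℕ) : ank coverN α α.sum α.length = 1 := by
  rw [ank_eq]
  haveI : Nonempty {c // ChProp α α.sum α.length c} :=
    ⟨⟨[α], List.isChain_singleton α, rfl, α, by simp, rfl, rfl⟩⟩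
  haveI : Subsingleton {c // ChProp α α.sum α.length c} := by
    constructor
    rintro ⟨c, hc⟩ ⟨c', hc'⟩
    exact Subtype.ext ((chprop_sum_self hc).1.trans (chprop_sum_self hc').1.symm)
  exact Nat.card_unique

lemma ank_diag' (α : List ℕ) (k : ℕ) (h : k ≠ α.length) : ank coverN α α.sum k = 0 := by
  rw [ank_eq]
  haveI : IsEmpty {c // ChProp α α.sum k c} := by
    constructor
    rintro ⟨c, hc⟩
    exact h (chprop_sum_self hc).2
  exact Nat.card_of_isEmpty

open PowerSeries

lemma coeff_mul_one_sub (f : PowerSeries ℤ) (k n : ℕ) :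
    coeff (n+1) (f * (1 - (k : PowerSeries ℤ) * X)) =
      coeff (n+1) f - (k : ℤ) * coeff n f := by
  have e : f * (1 - (k : PowerSeries ℤ) * X) = f - C (R := ℤ) (k : ℤ) * (f * X) := by
    rw [map_natCast (C (R := ℤ)) k]; ring
  rw [e, map_sub, coeff_C_mul, coeff_succ_mul_X]

lemma coeff_zero_mul_one_sub (f : PowerSeries ℤ) (k : ℕ) :
    coeff 0 (f * (1 - (k : PowerSeries ℤ) * X)) = coeff 0 f := by
  have e : f * (1 - (k : PowerSeries ℤ) * X) = f - C (R := ℤ) (k : ℤ) * (f * X) := by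
    rw [map_natCast (C (R := ℤ)) k]; ring
  rw [e, map_sub, coeff_C_mul]
  simp

lemma coeff_succ_two_X (g : PowerSeries ℤ) (n : ℕ) :
    coeff (n+1) (2 * X * g) = 2 * coeff n g := by
  have e : 2 * X * g = C (R := ℤ) 2 * (g * X) := by
    rw [map_ofNat]; ring
  rw [e, coeff_C_mul, coeff_succ_mul_X]

lemma coeff_zero_two_X (g : PowerSeries ℤ) : coeff 0 (2 * X * g) = 0 := by
  have e : 2 * X * g = C (R := ℤ) 2 * (g * X) := by
    rw [map_ofNat]; ring
  rw [e, coeff_C_mul]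
  simp

lemma coeff_Lser (α : List ℕ) (k n : ℕ) : coeff n (Lser coverN α k) = (ank coverN α n k : ℤ) := by
  simp [Lser, coeff_mk]

lemma Lstep (α : List ℕ) (hg : Good α) (h1 : 1 ≤ α.length) (k : ℕ) (hk : α.length ≤ k) :
    Lser coverN α k * (1 - (k : PowerSeries ℤ) * X) =
      2 * X * Lser coverN α (k-1) + (if k = α.length then X ^ α.sum else 0) := by
  have hN1 : 1 ≤ α.sum := le_trans h1 (len_le_sum hg.1)
  ext n
  cases n with
  | zero =>
    rw [coeff_zero_mul_one_sub, map_add, coeff_zero_two_X, coeff_Lser,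
      ank_lt_sum α 0 k (by omega)]
    split_ifs with h
    · rw [coeff_X_pow, if_neg (by omega)]
      norm_num
    · norm_num
  | succ n =>
    rw [coeff_mul_one_sub, map_add, coeff_succ_two_X, coeff_Lser, coeff_Lser, coeff_Lser]
    have hsplit : coeff (n+1) (if k = α.length then (X : PowerSeries ℤ) ^ α.sum else 0) =
        if k = α.length ∧ n + 1 = α.sum then 1 else 0 := by
      split_ifs with h h2 h3
      · rw [coeff_X_pow, if_pos h2.2]
      · rw [coeff_X_pow, if_neg (fun hc => h2 ⟨h, hc⟩)]
      · exact absurd h3.1 h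
      · simp
    rw [hsplit]
    rcases lt_trichotomy (n+1) α.sum with h | h | h
    · rw [ank_lt_sum α (n+1) k (by omega), ank_lt_sum α n k (by omega),
        ank_lt_sum α n (k-1) (by omega), if_neg (by omega)]
      norm_num
    · have h0 : n < α.sum := by omega
      rw [ank_lt_sum α n k h0, ank_lt_sum α n (k-1) h0]
      rcases eq_or_ne k α.length with hke | hke
      · subst hke
        rw [h, ank_diag, if_pos ⟨rfl, rfl⟩]
        norm_num
      · rw [h, ank_diag' α k hke, if_neg (fun hc => hke hc.1)]
        norm_num
    · have hrec := ank_rec α hg n k (by omega) (by omega)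
      rw [hrec, if_neg (by omega)]
      push_cast
      ring

lemma Lser_zero (α : List ℕ) (k : ℕ) (h : k < α.length) : Lser coverN α k = 0 := by
  ext n
  rw [coeff_Lser, ank_lt_len α n k h]
  simp


end Stmt10Aux

open Stmt10Aux in
open PowerSeries in
theorem stmt10 (α : List ℕ) (hα : IsComposition α) (N r : ℕ) (hN : α.sum = N)
    (hr : α.length = r) (hr1 : 1 ≤ r) (hno : ¬ ∀ a ∈ α, a = 1) :
    ∀ k, r ≤ k →
      Lser coverN α k * ∏ i ∈ Finset.Icc r k, (1 - (i : PowerSeries ℤ) * X) =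
        2 ^ (k - r) * X ^ (N + k - r) := by
  subst hN; subst hr
  have hg : Good α := by
    refine ⟨hα, ?_⟩
    push_neg at hno
    obtain ⟨a, ha, hne⟩ := hno
    exact ⟨a, ha, by have := hα a ha; omega⟩
  intro k hk
  induction k, hk using Nat.le_induction with
  | base =>
    rw [Finset.Icc_self, Finset.prod_singleton,
      Lstep α hg hr1 α.length le_rfl, Lser_zero α (α.length - 1) (by omega), if_pos rfl]
    simp
  | succ k hk ih =>
    rw [Finset.prod_Icc_succ_top (by omega : α.length ≤ k + 1), ← mul_assoc,
      mul_comm (Lser coverN α (k+1)) _, mul_assoc,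
      Lstep α hg hr1 (k+1) (by omega), if_neg (by omega), add_zero]
    have e0 : k + 1 - 1 = k := rfl
    rw [e0]
    rw [show (∏ i ∈ Finset.Icc α.length k, (1 - (i : PowerSeries ℤ) * X)) *
        (2 * X * Lser coverN α k) =
        2 * X * (Lser coverN α k * ∏ i ∈ Finset.Icc α.length k, (1 - (i : PowerSeries ℤ) * X))
      from by ring, ih]
    have e1 : k + 1 - α.length = (k - α.length) + 1 := by omega
    have e2 : α.sum + (k+1) - α.length = (α.sum + k - α.length) + 1 := by omega
    rw [e1, e2, pow_succ, pow_succ]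
    ring
end

section
/- Let α be the all-ones composition with r ≥ 1 parts. Define polynomials D_k ∈ ℤ[t] for k ≥ r by D_r = 1 and D_k = 2·D_{k−1} − ∏_{i=r}^{k−1} (1 − it) for k > r. Then for every k ≥ r, L_k^α[𝔑](t) · ∏_{i=r}^{k} (1 − it) = t^k · D_k in ℤ[[t]]. -/
namespace S12

lemma sum_set_succ : ∀ (P : List ℕ) (j : ℕ), j < P.length →
    (P.set j (P.getD j 0 + 1)).sum = P.sum + 1
  | a :: t, 0, _ => by simp [List.sum_cons]; ring
  | a :: t, j+1, h => by
    have := sum_set_succ t j (by simpa using h)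
    simp only [List.set, List.getD_cons_succ, List.sum_cons, this]
    ring

lemma cover_sum {P Q : List ℕ} (h : coverN P Q) : Q.sum = P.sum + 1 := by
  rcases h with rfl | rfl | ⟨j, hj, rfl⟩
  · simp [Nat.add_comm]
  · simp
  · exact sum_set_succ P j hj

lemma cover_len {P Q : List ℕ} (h : coverN P Q) :
    Q.length = P.length ∨ Q.length = P.length + 1 := by
  rcases h with rfl | rfl | ⟨j, hj, rfl⟩
  · right; simp
  · right; simp
  · left; simp

lemma cover_pos {P Q : List ℕ} (h : coverN P Q) (hP : ∀ x ∈ P, 0 < x) :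
    ∀ x ∈ Q, 0 < x := by
  rcases h with rfl | rfl | ⟨j, hj, rfl⟩
  · intro x hx
    rcases List.mem_cons.1 hx with rfl | hx
    · norm_num
    · exact hP x hx
  · intro x hx
    rcases List.mem_append.1 hx with hx | hx
    · exact hP x hx
    · simp only [List.mem_singleton] at hx; omega
  · intro x hx
    rcases List.mem_or_eq_of_mem_set hx with hx | rfl
    · exact hP x hx
    · omega

lemma allOnes_of_sum_eq_length : ∀ (Q : List ℕ), (∀ x ∈ Q, 0 < x) →
    Q.sum = Q.length → ∀ x ∈ Q, x = 1
  | [], _, _ => by simp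
  | a :: t, hpos, hsum => by
    have ha : 0 < a := hpos a (by simp)
    have ht : ∀ x ∈ t, 0 < x := fun x hx => hpos x (by simp [hx])
    have hts : t.length ≤ t.sum := List.length_le_sum_of_one_le t ht
    simp only [List.sum_cons, List.length_cons] at hsum
    have ha1 : a = 1 := by omega
    have : t.sum = t.length := by omega
    intro x hx
    rcases List.mem_cons.1 hx with rfl | hx
    · exact ha1
    · exact allOnes_of_sum_eq_length t ht this x hx

lemma eq_replicate_of_allOnes {P : List ℕ} (h : ∀ x ∈ P, x = 1) :
    P = List.replicate P.length 1 :=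
  List.eq_replicate_length.2 h

lemma append_one_eq_cons_of_allOnes {P : List ℕ} (h : ∀ x ∈ P, x = 1) :
    P ++ [1] = 1 :: P := by
  conv_lhs => rw [eq_replicate_of_allOnes h]
  conv_rhs => rw [eq_replicate_of_allOnes h]
  rw [← List.replicate_succ, ← List.replicate_succ']

lemma allOnes_of_cons_eq_append {P : List ℕ} (h : 1 :: P = P ++ [1]) :
    ∀ x ∈ P, x = 1 := by
  have : P <+: 1 :: P := ⟨[1], by simpa using h.symm⟩
  intro x hx
  -- 1 :: P = P ++ [1] implies P is all ones; prove by induction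
  clear this
  induction P generalizing x with
  | nil => simp at hx
  | cons a t ih =>
    simp only [List.cons_append, List.cons.injEq] at h
    rcases h with ⟨rfl, h2⟩
    rcases List.mem_cons.1 hx with rfl | hx
    · rfl
    · exact ih h2 x hx

/-- A good chain from `α` ending at `Q`. -/
def Good (α : List ℕ) (c : List (List ℕ)) (Q : List ℕ) : Prop :=
  c.Chain' coverN ∧ c.head? = some α ∧ c.getLast? = some Q

lemma good_singleton (α : List ℕ) : Good α [α] α := by
  refine ⟨List.isChain_singleton _, by simp, by simp⟩

lemma good_extend {α : List ℕ} {c : List (List ℕ)} {P Q : List ℕ}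
    (h : Good α c P) (hc : coverN P Q) : Good α (c ++ [Q]) Q := by
  obtain ⟨h1, h2, h3⟩ := h
  have hne : c ≠ [] := by rintro rfl; simp at h2
  refine ⟨?_, ?_, ?_⟩
  · rw [List.Chain', List.isChain_append]
    refine ⟨h1, by simp, ?_⟩
    intro x hx y hy
    simp only [List.head?_cons, Option.mem_def, Option.some.injEq] at hy
    rw [h3] at hx
    simp only [Option.mem_def, Option.some.injEq] at hx
    subst hx; subst hy; exact hc
  · rw [List.head?_append_of_ne_nil _ hne, h2]
  · simp

lemma good_peel {α : List ℕ} {c : List (List ℕ)} {Q : List ℕ}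
    (h : Good α c Q) (hlen : 2 ≤ c.length) :
    ∃ c' P, c = c' ++ [Q] ∧ Good α c' P ∧ coverN P Q := by
  obtain ⟨h1, h2, h3⟩ := h
  induction c using List.reverseRecOn with
  | nil => simp at h3
  | append_singleton l a _ =>
    have hl : l ≠ [] := by
      rintro rfl; simp at hlen
    have haQ : a = Q := by simpa using h3
    subst haQ
    obtain ⟨P, hP⟩ := List.getLast?_isSome.2 hl |> Option.isSome_iff_exists.1
    rw [List.Chain', List.isChain_append] at h1
    refine ⟨l, P, rfl, ⟨h1.1, ?_, hP⟩, ?_⟩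
    · rwa [List.head?_append_of_ne_nil _ hl] at h2
    · exact h1.2.2 P hP a (by simp)

/-- Invariants along a good chain. -/
lemma good_props {α : List ℕ} (hα : ∀ x ∈ α, 0 < x) :
    ∀ (m : ℕ) (c : List (List ℕ)) (Q : List ℕ), c.length = m → Good α c Q →
      Q.sum + 1 = α.sum + c.length ∧ α.length ≤ Q.length ∧ ∀ x ∈ Q, 0 < x := by
  intro m
  induction m using Nat.strong_induction_on with
  | _ m ih =>
    intro c Q hm h
    have hne : c ≠ [] := by rintro rfl; simp [Good] at h
    rcases Nat.lt_or_ge c.length 2 with hl | hl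
    · have h1 : c.length = 1 := by
        have := List.length_pos_iff.2 hne; omega
      obtain ⟨a, rfl⟩ := List.length_eq_one_iff.1 h1
      obtain ⟨_, h2, h3⟩ := h
      simp only [List.head?_cons, Option.some.injEq] at h2
      simp only [List.getLast?_singleton, Option.some.injEq] at h3
      subst h2; subst h3
      exact ⟨by simp, le_refl _, hα⟩
    · obtain ⟨c', P, rfl, hg, hc⟩ := good_peel h hl
      have hlen : c'.length < m := by
        subst hm; simp
      obtain ⟨ih1, ih2, ih3⟩ := ih c'.length hlen c' P rfl hg
      have hs := cover_sum hc
      have hl2 := cover_len hc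
      refine ⟨by simp [hs]; omega, by omega, cover_pos hc ih3⟩

/-- The type of chains counted by `ank coverN α n k`. -/
def C (α : List ℕ) (n k : ℕ) : Type :=
  {c : List (List ℕ) //
    c.Chain' coverN ∧ c.head? = some α ∧
      ∃ Q, c.getLast? = some Q ∧ Q.sum = n ∧ Q.length = k}

/-- endpoint of a chain -/
def ep (c : List (List ℕ)) : List ℕ := c.getLast?.getD []

variable {α : List ℕ} {n k : ℕ}

lemma C.spec (c : C α n k) :
    Good α c.1 (ep c.1) ∧ (ep c.1).sum = n ∧ (ep c.1).length = k := by
  obtain ⟨c, h1, h2, Q, h3, h4, h5⟩ := c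
  have : ep c = Q := by simp [ep, h3]
  rw [this]
  exact ⟨⟨h1, h2, h3⟩, h4, h5⟩

lemma C.mk' {c : List (List ℕ)} {Q : List ℕ} (h : Good α c Q)
    (h4 : Q.sum = n) (h5 : Q.length = k) :
    (c.Chain' coverN ∧ c.head? = some α ∧
      ∃ Q, c.getLast? = some Q ∧ Q.sum = n ∧ Q.length = k) :=
  ⟨h.1, h.2.1, Q, h.2.2, h4, h5⟩

lemma C.len (hα : ∀ x ∈ α, 0 < x) (c : C α n k) :
    n + 1 = α.sum + c.1.length := by
  have h := (good_props hα c.1.length c.1 (ep c.1) rfl (C.spec c).1).1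
  rw [(C.spec c).2.1] at h
  omega

lemma card_eq_zero_of_lt_sum (hα : ∀ x ∈ α, 0 < x) (h : n < α.sum) :
    Nat.card (C α n k) = 0 := by
  have : IsEmpty (C α n k) := by
    constructor; intro c
    have := C.len hα c
    have : 1 ≤ c.1.length := by
      have hne : c.1 ≠ [] := by
        have := (C.spec c).1.2.1
        intro h'; rw [h'] at this; simp at this
      exact List.length_pos_iff.2 hne
    omega
  simp [Nat.card_of_isEmpty]

lemma card_eq_zero_of_lt_len (hα : ∀ x ∈ α, 0 < x) (h : k < α.length) :
    Nat.card (C α n k) = 0 := by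
  have : IsEmpty (C α n k) := by
    constructor; intro c
    obtain ⟨hg, hs, hl⟩ := C.spec c
    have := (good_props hα c.1.length c.1 (ep c.1) rfl hg).2.1
    omega
  simp [Nat.card_of_isEmpty]

lemma card_eq_zero_of_lt (hα : ∀ x ∈ α, 0 < x) (h : n < k) :
    Nat.card (C α n k) = 0 := by
  have : IsEmpty (C α n k) := by
    constructor; intro c
    obtain ⟨hg, hs, hl⟩ := C.spec c
    have hpos := (good_props hα c.1.length c.1 (ep c.1) rfl hg).2.2
    have := List.length_le_sum_of_one_le (ep c.1) hpos
    omega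
  simp [Nat.card_of_isEmpty]

lemma eq_base (hα : ∀ x ∈ α, 0 < x) (c : C α α.sum k) : c.1 = [α] := by
  have hlen := C.len hα c
  have h1 : c.1.length = 1 := by omega
  obtain ⟨a, ha⟩ := List.length_eq_one_iff.1 h1
  have := (C.spec c).1.2.1
  rw [ha] at this
  simp only [List.head?_cons, Option.some.injEq] at this
  rw [ha, this]

lemma card_base_ne (hα : ∀ x ∈ α, 0 < x) (h : k ≠ α.length) :
    Nat.card (C α α.sum k) = 0 := by
  have : IsEmpty (C α α.sum k) := by
    constructor; intro c
    obtain ⟨hg, hs, hl⟩ := C.spec c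
    have hc := eq_base hα c
    have : ep c.1 = α := by simp [ep, hc]
    rw [this] at hl
    exact h hl.symm
  simp [Nat.card_of_isEmpty]

lemma card_base (hα : ∀ x ∈ α, 0 < x) :
    Nat.card (C α α.sum α.length) = 1 := by
  have : Unique (C α α.sum α.length) := by
    refine ⟨⟨⟨[α], C.mk' (good_singleton α) rfl rfl⟩⟩, ?_⟩
    intro c
    apply Subtype.ext
    exact eq_base hα c
  simp [Nat.card_unique]

lemma ep_good (c : C α n k) : Good α c.1 (ep c.1) := (C.spec c).1
lemma ep_sum (c : C α n k) : (ep c.1).sum = n := (C.spec c).2.1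
lemma ep_len (c : C α n k) : (ep c.1).length = k := (C.spec c).2.2
lemma ep_eq_of_getLast {c : List (List ℕ)} {Q : List ℕ} (h : c.getLast? = some Q) :
    ep c = Q := by simp [ep, h]

/-- Extension map realizing the recurrence. -/
def Gfun (α : List ℕ) (n k : ℕ) :
    (C α n (k+1) × Fin (k+1)) ⊕ ((C α n k) ⊕ {c : C α n k // ¬ ∀ x ∈ ep c.1, x = 1}) →
      C α (n+1) (k+1)
  | .inl (c, j) =>
    ⟨c.1 ++ [(ep c.1).set j ((ep c.1).getD j 0 + 1)],
      C.mk' (good_extend (ep_good c) (Or.inr (Or.inr ⟨j, by rw [ep_len c]; exact j.2, rfl⟩)))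
        (by rw [sum_set_succ _ _ (by rw [ep_len c]; exact j.2), ep_sum c])
        (by rw [List.length_set, ep_len c])⟩
  | .inr (.inl c) =>
    ⟨c.1 ++ [1 :: ep c.1],
      C.mk' (good_extend (ep_good c) (Or.inl rfl))
        (by simp [ep_sum c, Nat.add_comm])
        (by simp [ep_len c])⟩
  | .inr (.inr ⟨c, _⟩) =>
    ⟨c.1 ++ [ep c.1 ++ [1]],
      C.mk' (good_extend (ep_good c) (Or.inr (Or.inl rfl)))
        (by simp [ep_sum c])
        (by simp [ep_len c])⟩

lemma len_clash {c : C α n (k+1)} {c' : C α n k} (h : c.1 = c'.1) : False := by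
  have h1 := ep_len c
  have h2 := ep_len c'
  rw [h, h2] at h1
  omega

lemma Gfun_inj (α : List ℕ) (n k : ℕ) : Function.Injective (Gfun α n k) := by
  rintro (⟨c, j⟩ | (c | ⟨c, hc⟩)) (⟨c', j'⟩ | (c' | ⟨c', hc'⟩)) h
  all_goals
    have hv := Subtype.ext_iff.mp h
    simp only [Gfun] at hv
    obtain ⟨h1, h2⟩ := List.append_inj' hv rfl
    simp only [List.cons.injEq, and_true] at h2
    try exact absurd h1 (fun hh => len_clash hh)
  all_goals try exact absurd h1 (fun hh => len_clash hh.symm)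
  case inl.inl =>
    obtain rfl : c = c' := Subtype.ext h1
    suffices hj : j = j' by rw [hj]
    by_contra hj
    have hjl : (j : ℕ) < (ep c.1).length := by rw [ep_len c]; exact j.2
    have hjl' : (j : ℕ) < ((ep c.1).set (j' : ℕ) ((ep c.1).getD (j' : ℕ) 0 + 1)).length := by
      rwa [List.length_set]
    have e1 : ((ep c.1).set (j : ℕ) ((ep c.1).getD (j : ℕ) 0 + 1))[(j : ℕ)]'(by rwa [List.length_set]) =
        (ep c.1).getD (j : ℕ) 0 + 1 := List.getElem_set_self _
    have e2 : ((ep c.1).set (j' : ℕ) ((ep c.1).getD (j' : ℕ) 0 + 1))[(j : ℕ)]'hjl' =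
        (ep c.1)[(j : ℕ)]'hjl := List.getElem_set_ne (fun hh => hj (Fin.ext hh.symm)) _
    have e3 : ((ep c.1).set (j : ℕ) ((ep c.1).getD (j : ℕ) 0 + 1))[(j : ℕ)]'(by rwa [List.length_set]) =
        ((ep c.1).set (j' : ℕ) ((ep c.1).getD (j' : ℕ) 0 + 1))[(j : ℕ)]'hjl' :=
      List.getElem_of_eq h2 _
    have key : (ep c.1).getD (j : ℕ) 0 + 1 = (ep c.1)[(j : ℕ)]'hjl := by
      rw [← e1, e3, e2]
    rw [List.getD_eq_getElem _ _ hjl] at key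
    omega
  case inr.inl.inr.inl =>
    obtain rfl : c = c' := Subtype.ext h1
    rfl
  case inr.inl.inr.inr =>
    obtain rfl : c = c' := Subtype.ext h1
    exact absurd (allOnes_of_cons_eq_append h2) hc'
  case inr.inr.inr.inl =>
    obtain rfl : c = c' := Subtype.ext h1
    exact absurd (allOnes_of_cons_eq_append h2.symm) hc
  case inr.inr.inr.inr =>
    obtain rfl : c = c' := Subtype.ext h1
    rfl
lemma Gfun_surj (hα : ∀ x ∈ α, 0 < x) (hn : α.sum ≤ n) :
    Function.Surjective (Gfun α n k) := by
  intro c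
  obtain ⟨hg, hs, hl⟩ := C.spec c
  have hlen2 : 2 ≤ c.1.length := by
    have := C.len hα c
    omega
  obtain ⟨l, P, hc, hgl, hcov⟩ := good_peel hg hlen2
  have hPs : (ep c.1).sum = P.sum + 1 := cover_sum hcov
  have hepl : ep l = P := ep_eq_of_getLast hgl.2.2
  rcases hcov with hQ | hQ | ⟨j, hj, hQ⟩
  · -- prepend
    have hPl : P.length = k := by
      rw [hQ] at hl; simpa using hl
    refine ⟨Sum.inr (Sum.inl ⟨l, C.mk' hgl (by omega) hPl⟩), ?_⟩
    apply Subtype.ext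
    show l ++ [1 :: ep l] = c.1
    rw [hepl, ← hQ]; exact hc.symm
  · -- append
    have hPl : P.length = k := by
      rw [hQ] at hl; simpa using hl
    by_cases hall : ∀ x ∈ P, x = 1
    · refine ⟨Sum.inr (Sum.inl ⟨l, C.mk' hgl (by omega) hPl⟩), ?_⟩
      apply Subtype.ext
      show l ++ [1 :: ep l] = c.1
      rw [hepl, ← append_one_eq_cons_of_allOnes hall, ← hQ]; exact hc.symm
    · refine ⟨Sum.inr (Sum.inr ⟨⟨l, C.mk' hgl (by omega) hPl⟩, ?_⟩), ?_⟩
      · show ¬ ∀ x ∈ ep l, x = 1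
        rwa [hepl]
      · apply Subtype.ext
        show l ++ [ep l ++ [1]] = c.1
        rw [hepl, ← hQ]; exact hc.symm
  · -- set
    have hPl : P.length = k + 1 := by
      rw [hQ] at hl; simpa using hl
    refine ⟨Sum.inl (⟨l, C.mk' hgl (by omega) hPl⟩, ⟨j, by omega⟩), ?_⟩
    apply Subtype.ext
    show l ++ [(ep l).set j ((ep l).getD j 0 + 1)] = c.1
    rw [hepl, ← hQ]; exact hc.symm

/-- Finiteness of the chain types. -/
lemma finite_C (hα : ∀ x ∈ α, 0 < x) : ∀ n k, Finite (C α n k) := by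
  intro n
  induction n using Nat.strong_induction_on with
  | _ n ih =>
    intro k
    rcases Nat.lt_or_ge n α.sum with hlt | hge
    · have : IsEmpty (C α n k) := by
        constructor; intro c
        have h1 := C.len hα c
        have h2 : c.1 ≠ [] := by
          have := (C.spec c).1.2.1
          intro h'; rw [h'] at this; simp at this
        have := List.length_pos_iff.2 h2
        omega
      infer_instance
    · rcases Nat.eq_or_lt_of_le hge with heq | hlt
      · subst heq
        have : Subsingleton (C α α.sum k) := by
          constructor; intro c c'
          apply Subtype.ext
          rw [eq_base hα c, eq_base hα c']
        exact Finite.of_subsingleton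
      · obtain ⟨m, rfl⟩ : ∃ m, n = m + 1 := ⟨n - 1, by omega⟩
        have hm : α.sum ≤ m := by omega
        cases k with
        | zero =>
          have : IsEmpty (C α (m + 1) 0) := by
            constructor; intro c
            have h1 := ep_sum c
            have h2 := ep_len c
            have : ep c.1 = [] := List.length_eq_zero_iff.1 h2
            rw [this] at h1
            simp at h1
          infer_instance
        | succ k' =>
          haveI := ih m (by omega) (k' + 1)
          haveI := ih m (by omega) k'
          exact Finite.of_surjective _ (Gfun_surj hα hm)
lemma rec_card (hα : ∀ x ∈ α, 0 < x) (hn : α.sum ≤ n) :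
    Nat.card (C α (n+1) (k+1)) =
      (k+1) * Nat.card (C α n (k+1)) + Nat.card (C α n k)
        + Nat.card {c : C α n k // ¬ ∀ x ∈ ep c.1, x = 1} := by
  haveI := finite_C hα n (k+1)
  haveI := finite_C hα n k
  have hb : Function.Bijective (Gfun α n k) := ⟨Gfun_inj α n k, Gfun_surj hα hn⟩
  rw [← Nat.card_congr (Equiv.ofBijective _ hb)]
  rw [Nat.card_sum, Nat.card_sum, Nat.card_prod, Nat.card_eq_fintype_card (α := Fin (k+1)),
    Fintype.card_fin]
  ring

lemma split_card (hα : ∀ x ∈ α, 0 < x) :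
    Nat.card (C α n k) =
      Nat.card {c : C α n k // ∀ x ∈ ep c.1, x = 1}
        + Nat.card {c : C α n k // ¬ ∀ x ∈ ep c.1, x = 1} := by
  haveI := finite_C hα n k
  classical
  rw [← Nat.card_sum, Nat.card_congr (Equiv.sumCompl _)]

lemma allones_card (hα : ∀ x ∈ α, 0 < x) :
    Nat.card {c : C α n k // ∀ x ∈ ep c.1, x = 1} =
      if n = k then Nat.card (C α n k) else 0 := by
  split_ifs with hnk
  · subst hnk
    refine Nat.card_congr (Equiv.subtypeUnivEquiv ?_)
    intro c
    have hpos := (good_props hα c.1.length c.1 (ep c.1) rfl (ep_good c)).2.2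
    exact allOnes_of_sum_eq_length _ hpos (by rw [ep_sum c, ep_len c])
  · have : IsEmpty {c : C α n k // ∀ x ∈ ep c.1, x = 1} := by
      constructor; rintro ⟨c, hall⟩
      apply hnk
      have h1 := ep_sum c
      have h2 := ep_len c
      rw [eq_replicate_of_allOnes hall] at h1
      simp at h1
      omega
    simp [Nat.card_of_isEmpty]

/-- no chain ending on the diagonal has a non-all-ones endpoint -/
lemma notallones_card_diag (hα : ∀ x ∈ α, 0 < x) :
    Nat.card {c : C α n n // ¬ ∀ x ∈ ep c.1, x = 1} = 0 := by
  have : IsEmpty {c : C α n n // ¬ ∀ x ∈ ep c.1, x = 1} := by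
    constructor; rintro ⟨c, hall⟩
    apply hall
    have hpos := (good_props hα c.1.length c.1 (ep c.1) rfl (ep_good c)).2.2
    exact allOnes_of_sum_eq_length _ hpos (by rw [ep_sum c, ep_len c])
  exact Nat.card_of_isEmpty

lemma diag_card (hα : ∀ x ∈ α, 0 < x) (hs : α.sum = α.length) :
    ∀ m, α.sum ≤ m → Nat.card (C α m m) = 1 := by
  have hone : Nat.card (C α α.sum α.sum) = 1 := by
    have := card_base hα
    rwa [← hs] at this
  intro m
  induction m with
  | zero =>
    intro h
    have h0 : α.sum = 0 := by omega
    rw [← h0]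
    exact hone
  | succ p ih =>
    intro h
    rcases Nat.eq_or_lt_of_le h with heq | hlt
    · rw [← heq]
      exact hone
    · have hp : α.sum ≤ p := by omega
      rw [rec_card hα hp, card_eq_zero_of_lt hα (by omega), notallones_card_diag hα, ih hp]
      ring
lemma ank_eq (α : List ℕ) (n k : ℕ) : ank coverN α n k = Nat.card (C α n k) := rfl

end S12

open PowerSeries in
theorem stmt12 (r : ℕ) (hr : 1 ≤ r) (α : List ℕ) (hα : α = List.replicate r 1)
    (D : ℕ → Polynomial ℤ) (hDr : D r = 1)
    (hDk : ∀ k, r < k →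
      D k = 2 * D (k - 1) -
        ∏ i ∈ Finset.Ico r k, (1 - (i : Polynomial ℤ) * Polynomial.X)) :
    ∀ k, r ≤ k →
      Lser coverN α k * ∏ i ∈ Finset.Icc r k, (1 - (i : PowerSeries ℤ) * X) =
        X ^ k * (D k : PowerSeries ℤ) := by
  subst hα
  set α := List.replicate r 1 with hα
  have hαpos : ∀ x ∈ α, 0 < x := by
    intro x hx
    rw [hα, List.mem_replicate] at hx
    omega
  have hsum : α.sum = r := by simp [hα]
  have hlen : α.length = r := by simp [hα]
  have hs : α.sum = α.length := by rw [hsum, hlen]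
  set A : ℕ → ℕ → ℤ := fun n k => (Nat.card (S12.C α n k) : ℤ) with hA
  have F0 : ∀ n k : ℕ, n < k → A n k = 0 := by
    intro n k h
    simp [hA, S12.card_eq_zero_of_lt hαpos h]
  have F1 : ∀ n k : ℕ, k < r → A n k = 0 := by
    intro n k h
    simp [hA, S12.card_eq_zero_of_lt_len hαpos (by omega : k < α.length)]
  have F2 : ∀ m : ℕ, r ≤ m → A m m = 1 := by
    intro m h
    simp [hA, S12.diag_card hαpos hs m (by omega : α.sum ≤ m)]
  have F3 : ∀ n k : ℕ, r ≤ n →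
      A (n+1) (k+1) = (k+1) * A n (k+1) + 2 * A n k - (if n = k then 1 else 0) := by
    intro n k hn
    have h1 := S12.rec_card (α := α) (n := n) (k := k) hαpos (by omega)
    have h2 := S12.split_card (α := α) (n := n) (k := k) hαpos
    have h3 := S12.allones_card (α := α) (n := n) (k := k) hαpos
    by_cases hnk : n = k
    · subst hnk
      rw [if_pos rfl] at h3
      have hd : Nat.card (S12.C α n n) = 1 := S12.diag_card hαpos hs n (by omega)
      have hz : Nat.card (S12.C α n (n+1)) = 0 := S12.card_eq_zero_of_lt hαpos (by omega)
      rw [if_pos rfl]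
      rw [hd] at h2 h3
      have hm : Nat.card {c : S12.C α n n // ¬ ∀ x ∈ S12.ep c.1, x = 1} = 0 := by omega
      rw [hz, hd, hm] at h1
      simp only [hA]
      rw [h1, hz, hd]
      push_cast
      ring
    · rw [if_neg hnk] at h3
      rw [if_neg hnk]
      rw [h3, Nat.zero_add] at h2
      rw [← h2] at h1
      simp only [hA]
      rw [h1]
      push_cast
      ring
  have coeffL : ∀ (K m : ℕ), (PowerSeries.coeff m) (Lser coverN α K) = A m K := by
    intro K m
    simp [Lser, PowerSeries.coeff_mk, S12.ank_eq, hA]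
  have coeff_mul_one_sub : ∀ (f : PowerSeries ℤ) (c : ℤ) (m : ℕ),
      (PowerSeries.coeff m) (f * (1 - PowerSeries.C c * X)) =
        (PowerSeries.coeff m) f
          - c * (if m = 0 then 0 else (PowerSeries.coeff (m-1)) f) := by
    intro f c m
    have hf : f * (1 - PowerSeries.C c * X) = f - PowerSeries.C c * (f * X) := by ring
    rw [hf, map_sub, PowerSeries.coeff_C_mul]
    cases m with
    | zero =>
      simp only [if_pos rfl, mul_zero]
      rw [PowerSeries.coeff_zero_eq_constantCoeff, map_mul]
      simp
    | succ p => simp [PowerSeries.coeff_succ_mul_X]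
  have FEbase : Lser coverN α r * (1 - (r : PowerSeries ℤ) * X) = X ^ r := by
    ext m
    rw [← map_natCast (PowerSeries.C (R := ℤ)) r, coeff_mul_one_sub, PowerSeries.coeff_X_pow, coeffL]
    cases m with
    | zero =>
      rw [F0 0 r (by omega), if_pos rfl, if_neg (by omega)]
      ring
    | succ p =>
      rw [if_neg (by omega), coeffL]
      simp only [Nat.add_sub_cancel]
      rcases lt_trichotomy (p+1) r with hlt | heq | hgt
      · rw [F0 (p+1) r (by omega), F0 p r (by omega), if_neg (by omega)]
        ring
      · rw [heq, F2 r (le_refl r), F0 p r (by omega), if_pos rfl]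
        ring
      · obtain ⟨q, rfl⟩ : ∃ q, r = q + 1 := ⟨r - 1, by omega⟩
        have h3 := F3 p q (by omega)
        rw [h3, F1 p q (by omega), if_neg (by omega), if_neg (by omega)]
        push_cast
        ring
  have FEstep : ∀ k : ℕ, r ≤ k →
      Lser coverN α (k+1) * (1 - ((k+1 : ℕ) : PowerSeries ℤ) * X) =
        2 * X * Lser coverN α k - X ^ (k+1) := by
    intro k hk
    have h2C : (2 : PowerSeries ℤ) * X * Lser coverN α k =
        PowerSeries.C 2 * (Lser coverN α k * X) := by
      rw [show (2 : PowerSeries ℤ) = PowerSeries.C 2 from (map_ofNat _ 2).symm]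
      ring
    ext m
    rw [← map_natCast (PowerSeries.C (R := ℤ)) (k+1), coeff_mul_one_sub, map_sub, h2C,
      PowerSeries.coeff_C_mul, PowerSeries.coeff_X_pow, coeffL]
    cases m with
    | zero =>
      rw [F0 0 (k+1) (by omega), if_pos rfl, if_neg (by omega)]
      simp only [PowerSeries.coeff_zero_eq_constantCoeff, map_mul]
      simp
    | succ p =>
      rw [if_neg (by omega), coeffL, PowerSeries.coeff_succ_mul_X, coeffL]
      simp only [Nat.add_sub_cancel]
      rcases Nat.lt_or_ge p r with hlt | hge
      · rw [F0 (p+1) (k+1) (by omega), F0 p (k+1) (by omega), F0 p k (by omega),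
          if_neg (by omega)]
        ring
      · have h3 := F3 p k hge
        rw [h3]
        by_cases hpk : p = k
        · rw [if_pos hpk, if_pos (by omega)]
          push_cast
          ring
        · rw [if_neg hpk, if_neg (by omega)]
          push_cast
          ring
  have hprod : ∀ K : ℕ, ((∏ i ∈ Finset.Icc r K, (1 - (i : Polynomial ℤ) * Polynomial.X) :
      Polynomial ℤ) : PowerSeries ℤ) =
      ∏ i ∈ Finset.Icc r K, (1 - (i : PowerSeries ℤ) * X) := by
    intro K
    rw [← Polynomial.coeToPowerSeries.ringHom_apply, map_prod]
    refine Finset.prod_congr rfl fun i _ => ?_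
    rw [map_sub, map_one, map_mul, map_natCast]
    rw [Polynomial.coeToPowerSeries.ringHom_apply, Polynomial.coe_X]
  refine Nat.le_induction ?_ ?_
  · rw [Finset.Icc_self, Finset.prod_singleton, hDr, Polynomial.coe_one, mul_one]
    exact FEbase
  · intro k hk IH
    rw [Finset.prod_Icc_succ_top (by omega : r ≤ k + 1)]
    have key : Lser coverN α (k+1) * ((∏ i ∈ Finset.Icc r k, (1 - (i : PowerSeries ℤ) * X)) *
        (1 - ((k+1 : ℕ) : PowerSeries ℤ) * X)) =
        (2 * X * Lser coverN α k - X ^ (k+1)) *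
          ∏ i ∈ Finset.Icc r k, (1 - (i : PowerSeries ℤ) * X) := by
      rw [show Lser coverN α (k+1) * ((∏ i ∈ Finset.Icc r k, (1 - (i : PowerSeries ℤ) * X)) *
          (1 - ((k+1 : ℕ) : PowerSeries ℤ) * X)) =
          (Lser coverN α (k+1) * (1 - ((k+1 : ℕ) : PowerSeries ℤ) * X)) *
            ∏ i ∈ Finset.Icc r k, (1 - (i : PowerSeries ℤ) * X) from by ring,
        FEstep k hk]
    push_cast at key ⊢
    rw [key]
    rw [sub_mul, mul_assoc, IH]
    have hD : (D (k+1) : PowerSeries ℤ) =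
        2 * (D k : PowerSeries ℤ) - ∏ i ∈ Finset.Icc r k, (1 - (i : PowerSeries ℤ) * X) := by
      rw [hDk (k+1) (by omega), Nat.add_sub_cancel, Finset.Ico_add_one_right_eq_Icc]
      rw [Polynomial.coe_sub, Polynomial.coe_mul, hprod,
        show ((2 : Polynomial ℤ) : PowerSeries ℤ) = 2 from by
          rw [← Polynomial.coeToPowerSeries.ringHom_apply, map_ofNat]]
    rw [hD]
    ring
end

section
/- Fix r ≥ 1 and define polynomials D_k ∈ ℤ[t] for k ≥ r by D_r = 1 and D_k = 2·D_{k−1} − ∏_{i=r}^{k−1} (1 − it) for k > r. Then for every k > r, the polynomial D_k has degree k − r, constant term 1, and leading coefficient (−1)^{k−r+1}·(k−1)!/(r−1)!. -/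
open Polynomial Finset

lemma fact_prod (r : ℕ) (hr : 1 ≤ r) : ∀ k, r ≤ k →
    (r-1).factorial * ∏ i ∈ Finset.Ico r k, i = (k-1).factorial := by
  intro k hk
  induction k, hk using Nat.le_induction with
  | base => simp
  | succ k hk ih =>
    rw [Finset.prod_Ico_succ_top hk, ← mul_assoc, ih, Nat.add_sub_cancel,
      mul_comm, Nat.mul_factorial_pred (lt_of_lt_of_le hr hk).ne']

lemma fact_div (r k : ℕ) (hr : 1 ≤ r) (hk : r ≤ k) :
    ((k-1).factorial / (r-1).factorial : ℕ) = ∏ i ∈ Finset.Ico r k, i :=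
  Nat.div_eq_of_eq_mul_left (Nat.factorial_pos _)
    (by rw [mul_comm, fact_prod r hr k hk])

lemma factor_eq (i : ℕ) : (1 - (i : Polynomial ℤ) * X) = C (-(i:ℤ)) * X + C 1 := by
  rw [map_neg, map_one, Polynomial.C_eq_natCast]
  ring

lemma factor_natDegree (i : ℕ) (hi : 1 ≤ i) :
    (1 - (i : Polynomial ℤ) * X).natDegree = 1 := by
  rw [factor_eq]
  exact natDegree_linear (by simpa using Nat.one_le_iff_ne_zero.mp hi)

lemma factor_lead (i : ℕ) (hi : 1 ≤ i) :
    (1 - (i : Polynomial ℤ) * X).leadingCoeff = -(i:ℤ) := by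
  rw [factor_eq]
  exact leadingCoeff_linear (by simpa using Nat.one_le_iff_ne_zero.mp hi)

lemma factor_ne (i : ℕ) (hi : 1 ≤ i) : (1 - (i : Polynomial ℤ) * X) ≠ 0 := by
  intro h
  have := factor_natDegree i hi
  rw [h] at this
  simp at this

lemma prod_natDegree (r k : ℕ) (hr : 1 ≤ r) :
    (∏ i ∈ Finset.Ico r k, (1 - (i : Polynomial ℤ) * X)).natDegree = k - r := by
  rw [natDegree_prod]
  · rw [Finset.sum_congr rfl (fun i hi => factor_natDegree i (hr.trans (Finset.mem_Ico.mp hi).1))]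
    simp [Nat.card_Ico]
  · exact fun i hi => factor_ne i (hr.trans (Finset.mem_Ico.mp hi).1)

lemma prod_lead (r k : ℕ) (hr : 1 ≤ r) (hk : r ≤ k) :
    (∏ i ∈ Finset.Ico r k, (1 - (i : Polynomial ℤ) * X)).leadingCoeff =
      ((-1:ℤ))^(k-r) * (((k-1).factorial / (r-1).factorial : ℕ) : ℤ) := by
  rw [leadingCoeff_prod]
  rw [Finset.prod_congr rfl (fun i hi => factor_lead i (hr.trans (Finset.mem_Ico.mp hi).1))]
  have : ∀ i : ℕ, -(i:ℤ) = (-1) * (i:ℤ) := fun i => by ring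
  simp_rw [this]
  rw [Finset.prod_mul_distrib, Finset.prod_const, Nat.card_Ico,
    fact_div r k hr hk]
  push_cast
  ring

lemma prod_coeff_zero (r k : ℕ) :
    (∏ i ∈ Finset.Ico r k, (1 - (i : Polynomial ℤ) * X)).coeff 0 = 1 := by
  rw [coeff_zero_eq_eval_zero, eval_prod]
  simp

theorem stmt13 (r : ℕ) (hr : 1 ≤ r) (D : ℕ → Polynomial ℤ) (hDr : D r = 1)
    (hDk : ∀ k, r < k →
      D k = 2 * D (k - 1) -
        ∏ i ∈ Finset.Ico r k, (1 - (i : Polynomial ℤ) * Polynomial.X)) :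
    ∀ k, r < k →
      (D k).natDegree = k - r ∧
      (D k).coeff 0 = 1 ∧
      (D k).leadingCoeff =
        (-1) ^ (k - r + 1) * ((Nat.factorial (k - 1) / Nat.factorial (r - 1) : ℕ) : ℤ) := by
  intro k hk
  induction k, hk using Nat.le_induction with
  | base =>
    have h := hDk (r+1) (Nat.lt_succ_self r)
    rw [Nat.add_sub_cancel, hDr] at h
    have h2 : D (r+1) = C (r:ℤ) * X + C 1 := by
      rw [h, show Finset.Ico r (r+1) = {r} by exact Nat.Ico_succ_singleton r,
        Finset.prod_singleton, C_1, Polynomial.C_eq_natCast]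
      ring
    have hne : (r:ℤ) ≠ 0 := by simpa using Nat.one_le_iff_ne_zero.mp hr
    have hfd : ((r+1-1).factorial / (r-1).factorial : ℕ) = r := by
      rw [fact_div r (r+1) hr (by omega)]; simp
    refine ⟨?_, ?_, ?_⟩
    · rw [h2, natDegree_linear hne]; omega
    · rw [coeff_zero_eq_eval_zero, h2]; simp
    · rw [h2, leadingCoeff_linear hne, hfd]
      have e : r + 1 - r + 1 = 2 := by omega
      rw [e]
      norm_num
  | succ k hk ih =>
    obtain ⟨ih1, ih2, ih3⟩ := ih
    have h := hDk (k+1) (by omega)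
    rw [Nat.add_sub_cancel] at h
    set P := ∏ i ∈ Finset.Ico r (k+1), (1 - (i : Polynomial ℤ) * X) with hP
    have hPd : P.natDegree = k+1-r := prod_natDegree r (k+1) hr
    have hd : (2 * D k).natDegree = k - r := by
      rw [show (2 : Polynomial ℤ) = C 2 by norm_num, natDegree_C_mul (by norm_num), ih1]
    have hlt : (2 * D k).natDegree < P.natDegree := by omega
    refine ⟨?_, ?_, ?_⟩
    · rw [h, natDegree_sub_eq_right_of_natDegree_lt hlt, hPd]
    · rw [coeff_zero_eq_eval_zero, h]
      have := prod_coeff_zero r (k+1)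
      rw [coeff_zero_eq_eval_zero] at this
      rw [eval_sub, eval_mul, this]
      have h0 : (D k).eval 0 = 1 := by rw [← coeff_zero_eq_eval_zero, ih2]
      rw [h0]; norm_num
    · rw [h, leadingCoeff_sub_of_degree_lt' (degree_lt_degree hlt),
        prod_lead r (k+1) hr (by omega)]
      have e1 : k+1-r = (k-r)+1 := by omega
      rw [e1, Nat.add_sub_cancel]
      ring
end
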